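/- arXiv:1612.00150 — 5 statements merged into one kernel-verified Lean document; each statement's English description precedes it below -/
import Mathlib

section
/- (Krasnosel'skii–Mann iteration) Let H be a finite-dimensional real inner product space, let P : H → H be nonexpansive (‖Px − Py‖ ≤ ‖x − y‖ for all x, y ∈ H), let β ∈ (0,1), and define the averaged operator Q = (1−β)·id + β·P. Suppose the fixed point set of Q is nonempty. Then from any starting point z⁰ ∈ H, the iteration z^{k+1} = Q z^k = (1−β)z^k + βPz^k produces a sequence {z^k} that converges to a point z* with Qz* = z* (equivalently, Pz* = z*). -/
open Filter

private lemma km_key {H : Type*} [NormedAddCommGroup H] [InnerProductSpace ℝ H]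
    (β : ℝ) (a b : H) :
    ‖(1-β)•a + β•b‖^2 = (1-β)*‖a‖^2 + β*‖b‖^2 - β*(1-β)*‖a-b‖^2 := by
  simp only [@norm_add_sq_real, @norm_sub_sq_real, norm_smul, real_inner_smul_left,
    real_inner_smul_right, mul_pow, sq_abs, Real.norm_eq_abs]
  ring

/-- **Krasnosel'skii–Mann iteration.** Let `H` be a finite-dimensional real inner
product space, `P : H → H` nonexpansive, `β ∈ (0,1)`, and
`Q = (1-β)·id + β·P` the associated averaged operator. If `Q` has a fixed point,
then from any starting point `z0` the iteration `z^{k+1} = Q z^k` converges to a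
fixed point `z*` of `Q` (equivalently, of `P`). -/
theorem krasnoselskii_mann_iteration {H : Type*} [NormedAddCommGroup H]
    [InnerProductSpace ℝ H] [FiniteDimensional ℝ H]
    (P : H → H) (hP : ∀ x y : H, ‖P x - P y‖ ≤ ‖x - y‖)
    (β : ℝ) (hβ : β ∈ Set.Ioo (0 : ℝ) 1)
    (Q : H → H) (hQ : ∀ z : H, Q z = (1 - β) • z + β • P z)
    (hfix : ∃ z : H, Q z = z)
    (z0 : H) :
    ∃ zstar : H, Q zstar = zstar ∧ P zstar = zstar ∧
      Tendsto (fun k => Q^[k] z0) atTop (nhds zstar) := by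
  obtain ⟨hβ0, hβ1⟩ := hβ
  obtain ⟨w, hw⟩ := hfix
  -- fixed points of Q are fixed points of P
  have hfixP : ∀ z : H, Q z = z → P z = z := by
    intro z h
    rw [hQ z] at h
    have hzz : (1-β) • z + β • z = z := by rw [← add_smul]; simp
    have h2 : β • P z = β • z :=
      calc β • P z = ((1-β) • z + β • P z) - (1-β) • z := by abel
        _ = z - (1-β) • z := by rw [h]
        _ = ((1-β) • z + β • z) - (1-β) • z := by rw [hzz]
        _ = β • z := by abel
    exact smul_right_injective H (ne_of_gt hβ0) h2
  -- Q is nonexpansive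
  have hQne : ∀ x y : H, ‖Q x - Q y‖ ≤ ‖x - y‖ := by
    intro x y
    rw [hQ x, hQ y]
    have heq : (1-β) • x + β • P x - ((1-β) • y + β • P y)
        = (1-β) • (x - y) + β • (P x - P y) := by
      simp only [smul_sub]; abel
    rw [heq]
    calc ‖(1-β) • (x - y) + β • (P x - P y)‖
        ≤ ‖(1-β) • (x - y)‖ + ‖β • (P x - P y)‖ := norm_add_le _ _
      _ = (1-β) * ‖x - y‖ + β * ‖P x - P y‖ := by
          rw [norm_smul, norm_smul, Real.norm_eq_abs, Real.norm_eq_abs,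
            abs_of_pos (by linarith), abs_of_pos hβ0]
      _ ≤ (1-β) * ‖x - y‖ + β * ‖x - y‖ := by
          have := hP x y; nlinarith
      _ = ‖x - y‖ := by ring
  -- the iteration sequence
  set z : ℕ → H := fun k => Q^[k] z0 with hz
  have hzsucc : ∀ k, z (k+1) = Q (z k) := by
    intro k; simp [hz, Function.iterate_succ_apply']
  -- key inequality
  have hkey : ∀ k, ‖z (k+1) - w‖^2 + β*(1-β)*‖z k - P (z k)‖^2 ≤ ‖z k - w‖^2 := by
    intro k
    rw [hzsucc k, hQ (z k)]
    have heq : (1-β) • z k + β • P (z k) - w = (1-β) • (z k - w) + β • (P (z k) - w) := by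
      nth_rewrite 1 [show w = (1-β) • w + β • w by rw [← add_smul]; simp]
      simp only [smul_sub]; abel
    rw [heq, km_key]
    have h1 : ‖P (z k) - w‖ ≤ ‖z k - w‖ := by
      calc ‖P (z k) - w‖ = ‖P (z k) - P w‖ := by rw [hfixP w hw]
        _ ≤ ‖z k - w‖ := hP _ _
    have h1sq : ‖P (z k) - w‖^2 ≤ ‖z k - w‖^2 :=
      pow_le_pow_left₀ (norm_nonneg _) h1 2
    have h2 : z k - w - (P (z k) - w) = z k - P (z k) := by abel
    rw [h2]
    have := mul_le_mul_of_nonneg_left h1sq hβ0.le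
    linarith
  -- d is antitone
  have hd_anti : Antitone (fun k => ‖z k - w‖) := by
    apply antitone_nat_of_succ_le
    intro k
    have hk := hkey k
    have hnn : (0:ℝ) ≤ β*(1-β)*‖z k - P (z k)‖^2 :=
      mul_nonneg (mul_pos hβ0 (by linarith : (0:ℝ) < 1-β)).le (sq_nonneg _)
    nlinarith [norm_nonneg (z (k+1) - w), norm_nonneg (z k - w)]
  have hd2_anti : Antitone (fun k => ‖z k - w‖^2) := fun m n hmn =>
    pow_le_pow_left₀ (norm_nonneg _) (hd_anti hmn) 2
  have hbdd : BddBelow (Set.range fun k => ‖z k - w‖^2) := by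
    refine ⟨0, ?_⟩; rintro x ⟨k, rfl⟩; positivity
  have hd2_lim := tendsto_atTop_ciInf hd2_anti hbdd
  -- residual tends to zero
  have hβ' : (0:ℝ) < β * (1-β) := mul_pos hβ0 (by linarith)
  have hres : Tendsto (fun k => ‖z k - P (z k)‖) atTop (nhds 0) := by
    have hdiff : Tendsto (fun k => ‖z k - w‖^2 - ‖z (k+1) - w‖^2) atTop (nhds 0) := by
      have h2 : Tendsto (fun k => ‖z (k+1) - w‖^2) atTop
          (nhds (⨅ i, ‖z i - w‖^2)) :=
        hd2_lim.comp (tendsto_add_atTop_nat 1)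
      have := hd2_lim.sub h2
      simpa using this
    have hsq : Tendsto (fun k => ‖z k - P (z k)‖^2) atTop (nhds 0) := by
      have hle : ∀ k, ‖z k - P (z k)‖^2 ≤ (β*(1-β))⁻¹ * (‖z k - w‖^2 - ‖z (k+1) - w‖^2) := by
        intro k
        have hk := hkey k
        have hmul : β*(1-β)*‖z k - P (z k)‖^2 ≤ ‖z k - w‖^2 - ‖z (k+1) - w‖^2 := by linarith
        calc ‖z k - P (z k)‖^2 = (β*(1-β))⁻¹ * (β*(1-β)*‖z k - P (z k)‖^2) := by
              field_simp
          _ ≤ (β*(1-β))⁻¹ * (‖z k - w‖^2 - ‖z (k+1) - w‖^2) :=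
              mul_le_mul_of_nonneg_left hmul (inv_nonneg.mpr hβ'.le)
      have hlim : Tendsto (fun k => (β*(1-β))⁻¹ * (‖z k - w‖^2 - ‖z (k+1) - w‖^2))
          atTop (nhds 0) := by
        have := hdiff.const_mul (β*(1-β))⁻¹
        simpa using this
      exact squeeze_zero (fun k => by positivity) hle hlim
    have : Tendsto (fun k => Real.sqrt (‖z k - P (z k)‖^2)) atTop (nhds (Real.sqrt 0)) :=
      (Real.continuous_sqrt.tendsto 0).comp hsq
    simpa [Real.sqrt_sq (norm_nonneg _)] using this
  -- bounded sequence in a compact ball; extract convergent subsequence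
  have hmem : ∀ k, z k ∈ Metric.closedBall w ‖z0 - w‖ := by
    intro k
    rw [Metric.mem_closedBall, dist_eq_norm]
    have h0 : z 0 = z0 := rfl
    have := hd_anti (Nat.zero_le k)
    simpa [h0] using this
  obtain ⟨zs, hzs_mem, φ, hφ, hφlim⟩ :=
    (isCompact_closedBall w ‖z0 - w‖).tendsto_subseq hmem
  -- zs is a fixed point of P
  have hPcont : Continuous P := by
    have : LipschitzWith 1 P := by
      intro x y
      rw [edist_dist, edist_dist, dist_eq_norm, dist_eq_norm]
      simp only [ENNReal.coe_one, one_mul]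
      exact ENNReal.ofReal_le_ofReal (hP x y)
    exact this.continuous
  have hPzs : P zs = zs := by
    have h1 : Tendsto (fun j => P (z (φ j))) atTop (nhds (P zs)) :=
      (hPcont.tendsto zs).comp hφlim
    have h2 : Tendsto (fun j => z (φ j) - P (z (φ j))) atTop (nhds (zs - P zs)) :=
      hφlim.sub h1
    have h3 : Tendsto (fun j => ‖z (φ j) - P (z (φ j))‖) atTop (nhds 0) :=
      hres.comp hφ.tendsto_atTop
    have h4 : Tendsto (fun j => z (φ j) - P (z (φ j))) atTop (nhds 0) := by
      rw [← tendsto_zero_iff_norm_tendsto_zero] at h3; exact h3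
    have h5 : zs - P zs = 0 := tendsto_nhds_unique h2 h4
    exact (sub_eq_zero.mp h5).symm
  have hQzs : Q zs = zs := by rw [hQ zs, hPzs, ← add_smul]; simp
  -- full convergence via Fejér monotonicity
  refine ⟨zs, hQzs, hPzs, ?_⟩
  have hds_anti : Antitone (fun k => ‖z k - zs‖) := by
    apply antitone_nat_of_succ_le
    intro k
    calc ‖z (k+1) - zs‖ = ‖Q (z k) - Q zs‖ := by rw [hzsucc k, hQzs]
      _ ≤ ‖z k - zs‖ := hQne _ _
  have hsub0 : Tendsto (fun j => ‖z (φ j) - zs‖) atTop (nhds 0) := by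
    have := hφlim.sub (tendsto_const_nhds (x := zs))
    rw [sub_self] at this
    exact (tendsto_zero_iff_norm_tendsto_zero.mp this)
  have hfull : Tendsto (fun k => ‖z k - zs‖) atTop (nhds 0) := by
    rw [Metric.tendsto_atTop]
    intro ε hε
    rw [Metric.tendsto_atTop] at hsub0
    obtain ⟨J, hJ⟩ := hsub0 ε hε
    refine ⟨φ J, fun k hk => ?_⟩
    have h1 : ‖z (φ J) - zs‖ < ε := by
      have := hJ J le_rfl
      rwa [Real.dist_eq, sub_zero, abs_of_nonneg (norm_nonneg _)] at this
    rw [Real.dist_eq, sub_zero, abs_of_nonneg (norm_nonneg _)]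
    exact lt_of_le_of_lt (hds_anti hk) h1
  have : Tendsto z atTop (nhds zs) := by
    rw [tendsto_iff_norm_sub_tendsto_zero]
    exact hfull
  exact this
end

section
/- Let H be a real inner product space, let τ ≥ 1 be an integer, let c > 0, and define the symmetric (τ+1)×(τ+1) matrix U' = U₁ + c·U₂ (indices 0,…,τ), where U₁ has a single nonzero entry (U₁)_{00} = 1 and U₂ is tridiagonal with (U₂)_{00} = τ, (U₂)_{jj} = 2(τ−j)+1 for 1 ≤ j ≤ τ, and (U₂)_{j,j+1} = (U₂)_{j+1,j} = j − τ for 0 ≤ j ≤ τ−1. Then for any vectors a_0, a_1, …, a_τ ∈ H, Σ_{i=0}^{τ} Σ_{j=0}^{τ} (U')_{ij} ⟨a_i, a_j⟩ = ‖a_0‖² + c · Σ_{j=0}^{τ−1} (τ−j) ‖a_j − a_{j+1}‖². -/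
open RealInnerProductSpace

/-- The tridiagonal matrix `U₂` (entries indexed by `0,…,τ`):
`(U₂)₀₀ = τ`, `(U₂)_{jj} = 2(τ-j)+1` for `1 ≤ j ≤ τ`, and
`(U₂)_{j,j+1} = (U₂)_{j+1,j} = j - τ` for `0 ≤ j ≤ τ-1`. -/
noncomputable def U2fun (τ : ℕ) : ℕ → ℕ → ℝ := fun i j =>
  if i = j then (if i = 0 then (τ : ℝ) else 2 * ((τ : ℝ) - (i : ℝ)) + 1)
  else if j = i + 1 then (i : ℝ) - (τ : ℝ)
  else if i = j + 1 then (j : ℝ) - (τ : ℝ)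
  else 0

/-- `U' = U₁ + c·U₂`, where `U₁` has a single nonzero entry `(U₁)₀₀ = 1`. -/
noncomputable def U'fun (τ : ℕ) (c : ℝ) : ℕ → ℕ → ℝ := fun i j =>
  (if i = 0 ∧ j = 0 then (1 : ℝ) else 0) + c * U2fun τ i j

lemma U2_split (τ i j : ℕ) :
    U2fun τ i j = (if i = j then (if i = 0 then (τ : ℝ) else 2 * ((τ : ℝ) - (i : ℝ)) + 1) else 0)
      + (if j = i + 1 then (i : ℝ) - (τ : ℝ) else 0)
      + (if i = j + 1 then (j : ℝ) - (τ : ℝ) else 0) := by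
  unfold U2fun
  split_ifs <;> first | ring1 | (exfalso; omega)

lemma range_filter_lt (τ : ℕ) : (Finset.range (τ+1)).filter (· < τ) = Finset.range τ := by
  ext x; simp; omega

lemma U2_sum (τ : ℕ) (hτ : 1 ≤ τ) (f : ℕ → ℕ → ℝ) :
    ∑ i ∈ Finset.range (τ + 1), ∑ j ∈ Finset.range (τ + 1), U2fun τ i j * f i j
    = ∑ k ∈ Finset.range τ, ((τ : ℝ) - (k : ℝ)) *
        (f k k - f k (k+1) - f (k+1) k + f (k+1) (k+1)) := by
  have hsplit : ∀ i j, U2fun τ i j * f i j =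
      (if i = j then (if i = 0 then (τ : ℝ) else 2 * ((τ : ℝ) - (i : ℝ)) + 1) * f i j else 0)
      + (if j = i + 1 then ((i : ℝ) - (τ : ℝ)) * f i j else 0)
      + (if i = j + 1 then ((j : ℝ) - (τ : ℝ)) * f i j else 0) := by
    intro i j
    rw [U2_split]
    split_ifs <;> ring
  simp only [hsplit, Finset.sum_add_distrib]
  -- diagonal part
  have hdiag : ∑ i ∈ Finset.range (τ + 1), ∑ j ∈ Finset.range (τ + 1),
      (if i = j then (if i = 0 then (τ : ℝ) else 2 * ((τ : ℝ) - (i : ℝ)) + 1) * f i j else 0)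
      = ∑ i ∈ Finset.range (τ + 1), (if i = 0 then (τ : ℝ) else 2 * ((τ : ℝ) - (i : ℝ)) + 1) * f i i := by
    refine Finset.sum_congr rfl fun i hi => ?_
    rw [Finset.sum_ite_eq (Finset.range (τ+1)) i (fun j => (if i = 0 then (τ : ℝ) else 2 * ((τ : ℝ) - (i : ℝ)) + 1) * f i j), if_pos hi]
  -- super diagonal
  have hsup : ∑ i ∈ Finset.range (τ + 1), ∑ j ∈ Finset.range (τ + 1),
      (if j = i + 1 then ((i : ℝ) - (τ : ℝ)) * f i j else 0)
      = ∑ i ∈ Finset.range τ, ((i : ℝ) - (τ : ℝ)) * f i (i+1) := by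
    have h1 : ∀ i ∈ Finset.range (τ+1), ∑ j ∈ Finset.range (τ + 1),
        (if j = i + 1 then ((i : ℝ) - (τ : ℝ)) * f i j else 0)
        = if i < τ then ((i : ℝ) - (τ : ℝ)) * f i (i+1) else 0 := by
      intro i hi
      rw [Finset.sum_ite_eq' (Finset.range (τ+1)) (i+1) (fun j => ((i : ℝ) - (τ : ℝ)) * f i j)]
      simp [Nat.lt_succ_iff, Nat.succ_le_iff]
    rw [Finset.sum_congr rfl h1, Finset.sum_ite, Finset.sum_const_zero, add_zero, range_filter_lt]
  -- sub diagonal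
  have hsub : ∑ i ∈ Finset.range (τ + 1), ∑ j ∈ Finset.range (τ + 1),
      (if i = j + 1 then ((j : ℝ) - (τ : ℝ)) * f i j else 0)
      = ∑ j ∈ Finset.range τ, ((j : ℝ) - (τ : ℝ)) * f (j+1) j := by
    rw [Finset.sum_comm]
    have h1 : ∀ j ∈ Finset.range (τ+1), ∑ i ∈ Finset.range (τ + 1),
        (if i = j + 1 then ((j : ℝ) - (τ : ℝ)) * f i j else 0)
        = if j < τ then ((j : ℝ) - (τ : ℝ)) * f (j+1) j else 0 := by
      intro j hj
      rw [Finset.sum_ite_eq' (Finset.range (τ+1)) (j+1) (fun i => ((j : ℝ) - (τ : ℝ)) * f i j)]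
      simp [Nat.lt_succ_iff, Nat.succ_le_iff]
    rw [Finset.sum_congr rfl h1, Finset.sum_ite, Finset.sum_const_zero, add_zero, range_filter_lt]
  rw [hdiag, hsup, hsub]
  -- rewrite diag sum as two shifted sums
  have hdiag2 : ∑ i ∈ Finset.range (τ + 1), (if i = 0 then (τ : ℝ) else 2 * ((τ : ℝ) - (i : ℝ)) + 1) * f i i
      = ∑ i ∈ Finset.range τ, ((τ : ℝ) - (i : ℝ)) * f i i
        + ∑ i ∈ Finset.range τ, ((τ : ℝ) - (i : ℝ)) * f (i+1) (i+1) := by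
    have key : ∀ i ∈ Finset.range (τ+1),
        (if i = 0 then (τ : ℝ) else 2 * ((τ : ℝ) - (i : ℝ)) + 1) * f i i
        = (if i < τ then ((τ : ℝ) - (i : ℝ)) * f i i else 0)
          + (if i = 0 then 0 else ((τ : ℝ) - (i : ℝ) + 1) * f i i) := by
      intro i hi
      simp only [Finset.mem_range, Nat.lt_succ_iff] at hi
      by_cases h0 : i = 0
      · subst h0
        have hpos : 0 < τ := hτ
        simp only [eq_self_iff_true, if_true, if_pos hpos]
        ring
      · rw [if_neg h0, if_neg h0]
        by_cases hlt : i < τ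
        · rw [if_pos hlt]; ring
        · have : i = τ := by omega
          subst this
          rw [if_neg hlt]
          ring
    rw [Finset.sum_congr rfl key, Finset.sum_add_distrib]
    congr 1
    · rw [Finset.sum_ite, Finset.sum_const_zero, add_zero, range_filter_lt]
    · rw [Finset.sum_range_succ' (fun i => if i = 0 then (0:ℝ) else ((τ : ℝ) - (i : ℝ) + 1) * f i i) τ]
      simp only [Nat.succ_ne_zero, if_false, eq_self_iff_true, if_true, add_zero, Nat.cast_add,
        Nat.cast_one]
      refine Finset.sum_congr rfl fun i hi => ?_
      ring
  rw [hdiag2]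
  rw [← Finset.sum_add_distrib, ← Finset.sum_add_distrib, ← Finset.sum_add_distrib]
  refine Finset.sum_congr rfl fun i hi => ?_
  ring

/-- **Quadratic form of the delay-absorbing metric.** For any vectors
`a₀,…,a_τ` in a real inner product space,
`Σᵢ Σⱼ (U')_{ij} ⟨aᵢ, aⱼ⟩ = ‖a₀‖² + c Σ_{j=0}^{τ-1} (τ-j) ‖aⱼ - a_{j+1}‖²`. -/
theorem U_metric_quadratic_form {H : Type*} [NormedAddCommGroup H]
    [InnerProductSpace ℝ H]
    (τ : ℕ) (hτ : 1 ≤ τ) (c : ℝ) (hc : 0 < c)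
    (a : ℕ → H) :
    ∑ i ∈ Finset.range (τ + 1), ∑ j ∈ Finset.range (τ + 1),
        U'fun τ c i j * ⟪a i, a j⟫
      = ‖a 0‖ ^ 2 + c * ∑ j ∈ Finset.range τ, ((τ : ℝ) - (j : ℝ)) * ‖a j - a (j + 1)‖ ^ 2 := by
  have hrw : ∀ i j : ℕ, U'fun τ c i j * ⟪a i, a j⟫
      = (if i = 0 then (if j = 0 then ⟪a i, a j⟫ else 0) else 0)
        + c * (U2fun τ i j * ⟪a i, a j⟫) := by
    intro i j
    unfold U'fun
    rw [ite_and]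
    split_ifs <;> ring
  simp only [hrw, Finset.sum_add_distrib, ← Finset.mul_sum]
  have hU1 : ∑ i ∈ Finset.range (τ + 1), ∑ j ∈ Finset.range (τ + 1),
      (if i = 0 then (if j = 0 then ⟪a i, a j⟫ else 0) else 0) = ‖a 0‖ ^ 2 := by
    have h1 : ∀ i ∈ Finset.range (τ + 1), ∑ j ∈ Finset.range (τ + 1),
        (if i = 0 then (if j = 0 then ⟪a i, a j⟫ else 0) else 0)
        = if i = 0 then ⟪a i, a 0⟫ else 0 := by
      intro i _
      by_cases h : i = 0
      · simp only [h, if_true]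
        rw [Finset.sum_ite_eq' (Finset.range (τ + 1)) 0 (fun j => ⟪a 0, a j⟫)]
        simp
      · simp [h]
    rw [Finset.sum_congr rfl h1,
      Finset.sum_ite_eq' (Finset.range (τ + 1)) 0 (fun i => ⟪a i, a 0⟫)]
    simp [real_inner_self_eq_norm_sq]
  rw [hU1, U2_sum τ hτ (fun i j => ⟪a i, a j⟫)]
  congr 1
  rw [Finset.mul_sum, Finset.mul_sum]
  refine Finset.sum_congr rfl fun k hk => ?_
  have : ‖a k - a (k + 1)‖ ^ 2
      = ⟪a k, a k⟫ - ⟪a k, a (k + 1)⟫ - ⟪a (k + 1), a k⟫ + ⟪a (k + 1), a (k + 1)⟫ := by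
    rw [norm_sub_sq_real, real_inner_comm (a (k + 1)) (a k), ← real_inner_self_eq_norm_sq,
      ← real_inner_self_eq_norm_sq]
    ring
  rw [this]
end

section
/- Let τ ≥ 1 be an integer and c > 0, and define the symmetric (τ+1)×(τ+1) real matrix U' = U₁ + c·U₂ (indices 0,…,τ), where U₁ has a single nonzero entry (U₁)_{00} = 1 and U₂ is tridiagonal with (U₂)_{00} = τ, (U₂)_{jj} = 2(τ−j)+1 for 1 ≤ j ≤ τ, and (U₂)_{j,j+1} = (U₂)_{j+1,j} = j − τ for 0 ≤ j ≤ τ−1. Then U' is positive definite. -/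
open Matrix

/-- Difference-of-indicators vector entry. -/
noncomputable def dd (i k : ℕ) : ℝ :=
  (if i = k then 1 else 0) - (if i = k + 1 then 1 else 0)

lemma mul_ind (P Q : Prop) [Decidable P] [Decidable Q] (a : ℝ) :
    (if P then (1:ℝ) else 0) * (if Q then (1:ℝ) else 0) * a = if P ∧ Q then a else 0 := by
  split_ifs <;> simp_all

lemma U2_eq_sum (τ i j : ℕ) (hi : i ≤ τ) (hj : j ≤ τ) :
    U2fun τ i j = ∑ k ∈ Finset.range τ, ((τ:ℝ) - k) * (dd i k * dd j k) := by
  have hsplit : ∀ k : ℕ, ((τ:ℝ) - k) * (dd i k * dd j k)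
      = ((if i = k ∧ j = k then ((τ:ℝ)-k) else 0)
        - (if i = k ∧ j = k + 1 then ((τ:ℝ)-k) else 0))
        + ((if i = k + 1 ∧ j = k + 1 then ((τ:ℝ)-k) else 0)
        - (if i = k + 1 ∧ j = k then ((τ:ℝ)-k) else 0)) := by
    intro k
    rw [← mul_ind (i = k) (j = k), ← mul_ind (i = k) (j = k + 1),
      ← mul_ind (i = k + 1) (j = k + 1), ← mul_ind (i = k + 1) (j = k)]
    simp only [dd]; ring
  rw [Finset.sum_congr rfl fun k _ => hsplit k]
  rw [Finset.sum_add_distrib, Finset.sum_sub_distrib, Finset.sum_sub_distrib]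
  have S1 : (∑ k ∈ Finset.range τ, if i = k ∧ j = k then ((τ:ℝ)-k) else 0)
      = if i = j ∧ i < τ then ((τ:ℝ)-i) else 0 := by
    by_cases hij : i = j
    · subst hij
      simp [Finset.sum_ite_eq, and_self]
    · rw [Finset.sum_eq_zero fun k _ => by rw [if_neg (by omega)]]
      rw [if_neg (by tauto)]
  have S2 : (∑ k ∈ Finset.range τ, if i = k ∧ j = k + 1 then ((τ:ℝ)-k) else 0)
      = if j = i + 1 then ((τ:ℝ)-i) else 0 := by
    by_cases hij : j = i + 1
    · subst hij
      have h1 : ∀ k ∈ Finset.range τ, (if i = k ∧ i + 1 = k + 1 then ((τ:ℝ)-k) else 0)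
          = if i = k then ((τ:ℝ)-k) else 0 := by
        intro k _; congr 1; simp
      rw [Finset.sum_congr rfl h1, Finset.sum_ite_eq, if_pos (Finset.mem_range.2 (by omega)),
        if_pos rfl]
    · rw [Finset.sum_eq_zero fun k _ => by rw [if_neg (by omega)], if_neg hij]
  have S3 : (∑ k ∈ Finset.range τ, if i = k + 1 ∧ j = k then ((τ:ℝ)-k) else 0)
      = if i = j + 1 then ((τ:ℝ)-j) else 0 := by
    by_cases hij : i = j + 1
    · subst hij
      have h1 : ∀ k ∈ Finset.range τ, (if j + 1 = k + 1 ∧ j = k then ((τ:ℝ)-k) else 0)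
          = if j = k then ((τ:ℝ)-k) else 0 := by
        intro k _; congr 1; simp
      rw [Finset.sum_congr rfl h1, Finset.sum_ite_eq, if_pos (Finset.mem_range.2 (by omega)),
        if_pos rfl]
    · rw [Finset.sum_eq_zero fun k _ => by rw [if_neg (by omega)], if_neg hij]
  have S4 : (∑ k ∈ Finset.range τ, if i = k + 1 ∧ j = k + 1 then ((τ:ℝ)-k) else 0)
      = if i = j ∧ 1 ≤ i then ((τ:ℝ) - (i:ℝ) + 1) else 0 := by
    rcases i with _ | m
    · rw [Finset.sum_eq_zero fun k _ => by rw [if_neg (by omega)], if_neg (by omega)]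
    · by_cases hij : m + 1 = j
      · subst hij
        have h1 : ∀ k ∈ Finset.range τ, (if m + 1 = k + 1 ∧ m + 1 = k + 1 then ((τ:ℝ)-k) else 0)
            = if m = k then ((τ:ℝ)-k) else 0 := by
          intro k _; congr 1; simp
        rw [Finset.sum_congr rfl h1, Finset.sum_ite_eq, if_pos (Finset.mem_range.2 (by omega)),
          if_pos (by omega)]
        push_cast; ring
      · rw [Finset.sum_eq_zero fun k _ => by rw [if_neg (by omega)], if_neg (by omega)]
  rw [S1, S2, S3, S4]
  by_cases hij : i = j
  · subst hij
    have h2 : ¬ i = i + 1 := by omega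
    simp only [U2fun, eq_self_iff_true, if_true, true_and, if_neg h2]
    rcases Nat.eq_zero_or_pos i with h0 | h1
    · subst h0
      rw [if_pos rfl, if_neg (by omega : ¬ (1:ℕ) ≤ 0)]
      rcases Nat.eq_zero_or_pos τ with h | h
      · subst h; norm_num
      · rw [if_pos h]; push_cast; ring
    · rw [if_neg (by omega : ¬ i = 0), if_pos (show 1 ≤ i from h1)]
      rcases lt_or_eq_of_le hi with h | h
      · rw [if_pos h]; ring
      · subst h; rw [if_neg (by omega : ¬ i < i)]; push_cast; ring
  · simp only [U2fun, if_neg hij, if_neg (show ¬(i = j ∧ i < τ) from fun h => hij h.1),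
      if_neg (show ¬(i = j ∧ 1 ≤ i) from fun h => hij h.1)]
    split_ifs
    all_goals try ring
    all_goals (exfalso; omega)

lemma U2symm (τ i j : ℕ) : U2fun τ i j = U2fun τ j i := by
  unfold U2fun
  by_cases h : i = j
  · subst h; rfl
  · have h' : ¬ j = i := fun hh => h hh.symm
    rw [if_neg h, if_neg h']
    split_ifs
    all_goals try rfl
    all_goals (exfalso; omega)

lemma U'symm (τ : ℕ) (c : ℝ) (i j : ℕ) : U'fun τ c i j = U'fun τ c j i := by
  unfold U'fun
  rw [U2symm τ i j]
  congr 1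
  exact if_congr and_comm rfl rfl

lemma tripl (n m : ℕ) (g : ℕ → ℝ) (v : ℕ → ℕ → ℝ) (x : Fin n → ℝ) :
    ∑ i : Fin n, x i * ∑ j : Fin n, (∑ k ∈ Finset.range m, g k * (v k (i:ℕ) * v k (j:ℕ))) * x j
    = ∑ k ∈ Finset.range m, g k * (∑ i : Fin n, x i * v k (i:ℕ))^2 := by
  calc ∑ i : Fin n, x i * ∑ j : Fin n, (∑ k ∈ Finset.range m, g k * (v k (i:ℕ) * v k (j:ℕ))) * x j
      = ∑ i : Fin n, ∑ j : Fin n, ∑ k ∈ Finset.range m,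
          (g k * (x i * v k (i:ℕ)) * (x j * v k (j:ℕ))) := by
        apply Finset.sum_congr rfl; intro i _
        rw [Finset.mul_sum]
        apply Finset.sum_congr rfl; intro j _
        rw [Finset.sum_mul, Finset.mul_sum]
        apply Finset.sum_congr rfl; intro k _
        ring
    _ = ∑ i : Fin n, ∑ k ∈ Finset.range m, ∑ j : Fin n,
          (g k * (x i * v k (i:ℕ)) * (x j * v k (j:ℕ))) := by
        exact Finset.sum_congr rfl fun i _ => Finset.sum_comm
    _ = ∑ k ∈ Finset.range m, ∑ i : Fin n, ∑ j : Fin n,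
          (g k * (x i * v k (i:ℕ)) * (x j * v k (j:ℕ))) := Finset.sum_comm
    _ = ∑ k ∈ Finset.range m, g k * (∑ i : Fin n, x i * v k (i:ℕ))^2 := by
        apply Finset.sum_congr rfl; intro k _
        rw [sq, Finset.sum_mul_sum, Finset.mul_sum]
        apply Finset.sum_congr rfl; intro i _
        rw [Finset.mul_sum]
        apply Finset.sum_congr rfl; intro j _
        ring

lemma pair (n : ℕ) (a : ℕ → ℝ) (x : Fin n → ℝ) :
    ∑ i : Fin n, x i * ∑ j : Fin n, (a (i:ℕ) * a (j:ℕ)) * x j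
    = (∑ i : Fin n, x i * a (i:ℕ))^2 := by
  rw [sq, Finset.sum_mul_sum]
  apply Finset.sum_congr rfl; intro i _
  rw [Finset.mul_sum]
  apply Finset.sum_congr rfl; intro j _
  ring

lemma sumind {n : ℕ} (x : Fin n → ℝ) (m : ℕ) (hm : m < n) :
    ∑ i : Fin n, x i * (if (i:ℕ) = m then (1:ℝ) else 0) = x ⟨m, hm⟩ := by
  rw [Finset.sum_eq_single (⟨m, hm⟩ : Fin n)]
  · simp
  · intro b _ hb
    rw [if_neg (fun h => hb (Fin.ext h)), mul_zero]
  · intro h; exact absurd (Finset.mem_univ _) h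

lemma sumdd {n : ℕ} (x : Fin n → ℝ) (k : ℕ) (hk : k + 1 < n) :
    ∑ i : Fin n, x i * dd (i:ℕ) k = x ⟨k, by omega⟩ - x ⟨k+1, hk⟩ := by
  simp only [dd, mul_sub]
  rw [Finset.sum_sub_distrib, sumind x k (by omega), sumind x (k+1) hk]

lemma quad (τ : ℕ) (c : ℝ) (x : Fin (τ+1) → ℝ) :
    x ⬝ᵥ ((Matrix.of fun i j : Fin (τ + 1) => U'fun τ c (i : ℕ) (j : ℕ)) *ᵥ x)
    = (x 0)^2 + ∑ k ∈ Finset.range τ,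
        (c * ((τ:ℝ)-k)) * (∑ i : Fin (τ+1), x i * dd (i:ℕ) k)^2 := by
  have hM : ∀ i j : Fin (τ+1), U'fun τ c (i:ℕ) (j:ℕ)
      = ((if (i:ℕ) = 0 then (1:ℝ) else 0) * (if (j:ℕ) = 0 then (1:ℝ) else 0))
        + ∑ k ∈ Finset.range τ, (c * ((τ:ℝ)-k)) * (dd (i:ℕ) k * dd (j:ℕ) k) := by
    intro i j
    have hi : (i:ℕ) ≤ τ := by omega
    have hj : (j:ℕ) ≤ τ := by omega
    unfold U'fun
    rw [U2_eq_sum τ i j hi hj, Finset.mul_sum]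
    congr 1
    · split_ifs <;> simp_all
    · apply Finset.sum_congr rfl; intro k _; ring
  simp only [dotProduct, mulVec, Matrix.of_apply]
  have expand : ∀ i : Fin (τ+1),
      (∑ j : Fin (τ+1), U'fun τ c (i:ℕ) (j:ℕ) * x j)
      = (∑ j : Fin (τ+1), ((if (i:ℕ) = 0 then (1:ℝ) else 0) * (if (j:ℕ) = 0 then (1:ℝ) else 0)) * x j)
        + (∑ j : Fin (τ+1), (∑ k ∈ Finset.range τ, (c * ((τ:ℝ)-k)) * (dd (i:ℕ) k * dd (j:ℕ) k)) * x j) := by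
    intro i
    rw [← Finset.sum_add_distrib]
    apply Finset.sum_congr rfl; intro j _
    rw [hM i j, add_mul]
  calc ∑ i : Fin (τ+1), x i * ∑ j : Fin (τ+1), U'fun τ c (i:ℕ) (j:ℕ) * x j
      = (∑ i : Fin (τ+1), x i * ∑ j : Fin (τ+1),
          ((if (i:ℕ) = 0 then (1:ℝ) else 0) * (if (j:ℕ) = 0 then (1:ℝ) else 0)) * x j)
        + (∑ i : Fin (τ+1), x i * ∑ j : Fin (τ+1),
          (∑ k ∈ Finset.range τ, (c * ((τ:ℝ)-k)) * (dd (i:ℕ) k * dd (j:ℕ) k)) * x j) := by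
        rw [← Finset.sum_add_distrib]
        apply Finset.sum_congr rfl; intro i _
        rw [expand i, mul_add]
    _ = (x 0)^2 + ∑ k ∈ Finset.range τ,
          (c * ((τ:ℝ)-k)) * (∑ i : Fin (τ+1), x i * dd (i:ℕ) k)^2 := by
        rw [pair (τ+1) (fun t => if t = 0 then (1:ℝ) else 0) x,
          tripl (τ+1) τ (fun k => c * ((τ:ℝ)-k)) (fun k t => dd t k) x]
        congr 1
        rw [sumind x 0 (by omega)]
        norm_num

/-- For `τ ≥ 1` and `c > 0`, the `(τ+1)×(τ+1)` matrix `U' = U₁ + c·U₂` is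
positive definite. -/
theorem U_metric_posDef (τ : ℕ) (hτ : 1 ≤ τ) (c : ℝ) (hc : 0 < c) :
    (Matrix.of fun i j : Fin (τ + 1) => U'fun τ c (i : ℕ) (j : ℕ)).PosDef := by
  rw [Matrix.posDef_iff_dotProduct_mulVec]
  constructor
  · ext i j
    simp only [Matrix.conjTranspose_apply, Matrix.of_apply, star_trivial]
    exact U'symm τ c (j:ℕ) (i:ℕ)
  · intro x hx
    have hstar : star x = x := by
      funext i; simp
    rw [hstar, quad τ c x]
    set e : ℕ → ℝ := fun k => ∑ i : Fin (τ+1), x i * dd (i:ℕ) k with he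
    have hterm : ∀ k ∈ Finset.range τ, 0 ≤ (c * ((τ:ℝ)-k)) * (e k)^2 := by
      intro k hk
      have hk' : k < τ := Finset.mem_range.1 hk
      have : (0:ℝ) < (τ:ℝ) - k := by
        have : (k:ℝ) < (τ:ℝ) := by exact_mod_cast hk'
        linarith
      positivity
    have hS : 0 ≤ ∑ k ∈ Finset.range τ, (c * ((τ:ℝ)-k)) * (e k)^2 :=
      Finset.sum_nonneg hterm
    have key : x 0 ≠ 0 ∨ ∃ k ∈ Finset.range τ, e k ≠ 0 := by
      by_contra hcon
      push_neg at hcon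
      obtain ⟨h0, hk⟩ := hcon
      apply hx
      have hall : ∀ m (hm : m < τ + 1), x ⟨m, hm⟩ = 0 := by
        intro m
        induction m with
        | zero => intro hm; simpa using h0
        | succ p ih =>
          intro hm
          have hp : p < τ := by omega
          have hep := hk p (Finset.mem_range.2 hp)
          rw [he] at hep
          have hsd := sumdd x p (show p + 1 < τ + 1 by omega)
          simp only [hep] at hsd
          have := ih (by omega)
          rw [← this]
          linarith [hsd]
      funext i
      have := hall (i:ℕ) i.isLt
      simpa using this
    rcases key with h0 | ⟨k, hk, hke⟩
    · have hx0 : 0 < (x 0)^2 :=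
        lt_of_le_of_ne (sq_nonneg _) (Ne.symm (pow_ne_zero 2 h0))
      linarith
    · have hk' : k < τ := Finset.mem_range.1 hk
      have htk : (0:ℝ) < (τ:ℝ) - k := by
        have : (k:ℝ) < (τ:ℝ) := by exact_mod_cast hk'
        linarith
      have hpos : 0 < (c * ((τ:ℝ)-k)) * (e k)^2 := by
        have : 0 < (e k)^2 := lt_of_le_of_ne (sq_nonneg _) (Ne.symm (pow_ne_zero 2 hke))
        positivity
      have hSpos : 0 < ∑ k ∈ Finset.range τ, (c * ((τ:ℝ)-k)) * (e k)^2 :=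
        Finset.sum_pos' hterm ⟨k, hk, hpos⟩
      have := sq_nonneg (x 0)
      linarith
end

section
/- Assume: (a) M ∈ ℝ^{N×N} is symmetric positive definite with condition number κ and M-norm ‖Z‖_M² = tr(Zᵀ M Z) on ℝ^{N×p}; (b) the row indices {1,…,N} are partitioned into n nonempty disjoint blocks, T : ℝ^{N×p} → ℝ^{N×p} is nonexpansive with respect to ‖·‖_M, S = I − T, and S_i Ẑ denotes the block-i restriction of S Ẑ (zero outside block i); (c) Z* satisfies TZ* = Z*; (d) q_1,…,q_n > 0 satisfy Σ_i q_i = 1, and q_min = min_i q_i; (e) τ ≥ 0 is an integer, Z^{k−τ},…,Z^k ∈ ℝ^{N×p}, J ⊆ {k−τ,…,k−1}, and Ẑ = Z^k + Σ_{d∈J}(Z^d − Z^{d+1}); (f) η > 0 and Z̄ = Z^k − η·SẐ. Then for every ξ > 0, Σ_{i=1}^n q_i ‖Z^k − (η/(n q_i)) S_i Ẑ − Z*‖_M² ≤ ‖Z^k − Z*‖_M² + (ξ/n) Σ_{d=k−τ}^{k−1} ‖Z^d − Z^{d+1}‖_M² + (1/n)·(τ/ξ + κ/(n q_min) − 1/η)·‖Z^k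 − Z̄‖_M². -/
open Matrix

/-- The squared `M`-norm `‖Z‖_M² = tr(Zᵀ M Z)` on `ℝ^{N×p}`. -/
noncomputable def Mnorm2 {N p : ℕ} (M : Matrix (Fin N) (Fin N) ℝ)
    (Z : Matrix (Fin N) (Fin p) ℝ) : ℝ :=
  (Zᵀ * M * Z).trace

/-- `blockRestrict b i A` agrees with `A` on the rows in block `i` (rows `j` with
`b j = i`) and is zero elsewhere. -/
def blockRestrict {N p n : ℕ} (b : Fin N → Fin n) (i : Fin n)
    (A : Matrix (Fin N) (Fin p) ℝ) : Matrix (Fin N) (Fin p) ℝ :=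
  Matrix.of fun j l => if b j = i then A j l else 0

namespace Async

variable {N p : ℕ} (M : Matrix (Fin N) (Fin N) ℝ)

/-- The `M`-inner product. -/
noncomputable def Minner (X Y : Matrix (Fin N) (Fin p) ℝ) : ℝ := (Xᵀ * M * Y).trace

lemma Mnorm2_eq (X : Matrix (Fin N) (Fin p) ℝ) : Mnorm2 M X = Minner M X X := rfl

lemma Minner_symm (hMs : Mᵀ = M) (X Y : Matrix (Fin N) (Fin p) ℝ) :
    Minner M X Y = Minner M Y X := by
  unfold Minner
  calc (Xᵀ * M * Y).trace = ((Xᵀ * M * Y)ᵀ).trace := (Matrix.trace_transpose _).symm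
    _ = (Yᵀ * M * X).trace := by
        rw [Matrix.transpose_mul, Matrix.transpose_mul, Matrix.transpose_transpose, hMs,
          Matrix.mul_assoc]

lemma Minner_add_left (X X' Y : Matrix (Fin N) (Fin p) ℝ) :
    Minner M (X + X') Y = Minner M X Y + Minner M X' Y := by
  simp [Minner, Matrix.transpose_add, Matrix.add_mul]

lemma Minner_add_right (X Y Y' : Matrix (Fin N) (Fin p) ℝ) :
    Minner M X (Y + Y') = Minner M X Y + Minner M X Y' := by
  simp [Minner, Matrix.mul_add]

lemma Minner_smul_left (c : ℝ) (X Y : Matrix (Fin N) (Fin p) ℝ) :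
    Minner M (c • X) Y = c * Minner M X Y := by
  simp [Minner, Matrix.transpose_smul, Matrix.smul_mul]

lemma Minner_smul_right (c : ℝ) (X Y : Matrix (Fin N) (Fin p) ℝ) :
    Minner M X (c • Y) = c * Minner M X Y := by
  simp [Minner, Matrix.mul_smul]

lemma Minner_sub_left (X X' Y : Matrix (Fin N) (Fin p) ℝ) :
    Minner M (X - X') Y = Minner M X Y - Minner M X' Y := by
  simp [Minner, Matrix.transpose_sub, Matrix.sub_mul]

lemma Minner_sub_right (X Y Y' : Matrix (Fin N) (Fin p) ℝ) :
    Minner M X (Y - Y') = Minner M X Y - Minner M X Y' := by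
  simp [Minner, Matrix.mul_sub]

lemma Minner_neg_left (X Y : Matrix (Fin N) (Fin p) ℝ) :
    Minner M (-X) Y = -Minner M X Y := by
  simp [Minner, Matrix.transpose_neg, Matrix.neg_mul]

lemma Minner_sum_left {ι : Type*} (s : Finset ι) (f : ι → Matrix (Fin N) (Fin p) ℝ)
    (Y : Matrix (Fin N) (Fin p) ℝ) :
    Minner M (∑ i ∈ s, f i) Y = ∑ i ∈ s, Minner M (f i) Y := by
  simp [Minner, Matrix.transpose_sum, Matrix.sum_mul]

lemma Minner_sum_right {ι : Type*} (s : Finset ι) (X : Matrix (Fin N) (Fin p) ℝ)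
    (f : ι → Matrix (Fin N) (Fin p) ℝ) :
    Minner M X (∑ i ∈ s, f i) = ∑ i ∈ s, Minner M X (f i) := by
  simp [Minner, Matrix.mul_sum]

lemma Mnorm2_smul (c : ℝ) (X : Matrix (Fin N) (Fin p) ℝ) :
    Mnorm2 M (c • X) = c ^ 2 * Mnorm2 M X := by
  rw [Mnorm2_eq, Minner_smul_left, Minner_smul_right, Mnorm2_eq]; ring

lemma Mnorm2_sub (hMs : Mᵀ = M) (X Y : Matrix (Fin N) (Fin p) ℝ) :
    Mnorm2 M (X - Y) = Mnorm2 M X - 2 * Minner M X Y + Mnorm2 M Y := by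
  rw [Mnorm2_eq, Minner_sub_left, Minner_sub_right, Minner_sub_right,
    Minner_symm M hMs Y X, Mnorm2_eq, Mnorm2_eq]; ring

lemma Mnorm2_col_sum (X : Matrix (Fin N) (Fin p) ℝ) :
    Mnorm2 M X = ∑ l, (fun j => X j l) ⬝ᵥ (M *ᵥ fun j => X j l) := by
  unfold Mnorm2
  simp only [Matrix.trace, Matrix.diag_apply, Matrix.mul_apply, Matrix.transpose_apply,
    Matrix.mulVec, dotProduct, Finset.sum_mul, Finset.mul_sum]
  refine Finset.sum_congr rfl fun l _ => ?_
  rw [Finset.sum_comm]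
  exact Finset.sum_congr rfl fun j _ => Finset.sum_congr rfl fun m _ => by ring

lemma Mnorm2_nonneg (hM : M.PosDef) (X : Matrix (Fin N) (Fin p) ℝ) :
    0 ≤ Mnorm2 M X := by
  rw [Mnorm2_col_sum]
  refine Finset.sum_nonneg fun l _ => ?_
  simpa using hM.posSemidef.dotProduct_mulVec_nonneg (fun j => X j l)

variable {M}

lemma quad_eq (hM : M.IsHermitian) (x : Fin N → ℝ) :
    x ⬝ᵥ M *ᵥ x = ∑ i, hM.eigenvalues i *
      (((star (hM.eigenvectorUnitary : Matrix (Fin N) (Fin N) ℝ)) *ᵥ x) i *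
        ((star (hM.eigenvectorUnitary : Matrix (Fin N) (Fin N) ℝ)) *ᵥ x) i) := by
  set U : Matrix (Fin N) (Fin N) ℝ := (hM.eigenvectorUnitary : Matrix (Fin N) (Fin N) ℝ) with hU
  set y : Fin N → ℝ := (star U) *ᵥ x with hy
  have hyv : Matrix.vecMul x U = y := by
    ext j
    simp [hy, Matrix.vecMul, Matrix.mulVec, dotProduct, Matrix.star_apply, mul_comm]
  have hspec := hM.spectral_theorem
  have hd : Matrix.diagonal (RCLike.ofReal ∘ hM.eigenvalues) =
      Matrix.diagonal hM.eigenvalues := by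
    congr 1
  rw [hd] at hspec
  calc x ⬝ᵥ M *ᵥ x
      = x ⬝ᵥ (U *ᵥ ((Matrix.diagonal hM.eigenvalues) *ᵥ ((star U) *ᵥ x))) := by
        conv_lhs => rw [hspec, Unitary.conjStarAlgAut_apply]
        rw [← Matrix.mulVec_mulVec, ← Matrix.mulVec_mulVec]
    _ = y ⬝ᵥ ((Matrix.diagonal hM.eigenvalues) *ᵥ y) := by
        rw [Matrix.dotProduct_mulVec, hyv, ← hy]
    _ = ∑ i, hM.eigenvalues i * (y i * y i) := by
        simp [dotProduct, Matrix.mulVec_diagonal]; ring_nf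
        exact Finset.sum_congr rfl fun i _ => by ring

lemma dot_eq (hM : M.IsHermitian) (x : Fin N → ℝ) :
    x ⬝ᵥ x = ∑ i, (((star (hM.eigenvectorUnitary : Matrix (Fin N) (Fin N) ℝ)) *ᵥ x) i *
        ((star (hM.eigenvectorUnitary : Matrix (Fin N) (Fin N) ℝ)) *ᵥ x) i) := by
  set U : Matrix (Fin N) (Fin N) ℝ := (hM.eigenvectorUnitary : Matrix (Fin N) (Fin N) ℝ) with hU
  set y : Fin N → ℝ := (star U) *ᵥ x with hy
  have hyv : Matrix.vecMul x U = y := by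
    ext j
    simp [hy, Matrix.vecMul, Matrix.mulVec, dotProduct, Matrix.star_apply, mul_comm]
  have hUU : U * star U = 1 := (Matrix.mem_unitaryGroup_iff).mp hM.eigenvectorUnitary.2
  have hx : U *ᵥ y = x := by
    rw [hy, Matrix.mulVec_mulVec, hUU, Matrix.one_mulVec]
  calc x ⬝ᵥ x = x ⬝ᵥ (U *ᵥ y) := by rw [hx]
    _ = y ⬝ᵥ y := by rw [Matrix.dotProduct_mulVec, hyv]
    _ = ∑ i, y i * y i := rfl

lemma quad_upper (hM : M.PosDef) {lmax : ℝ}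
    (h : ∀ i, hM.isHermitian.eigenvalues i ≤ lmax) (x : Fin N → ℝ) :
    x ⬝ᵥ M *ᵥ x ≤ lmax * (x ⬝ᵥ x) := by
  rw [quad_eq hM.isHermitian x, dot_eq hM.isHermitian x, Finset.mul_sum]
  exact Finset.sum_le_sum fun i _ =>
    mul_le_mul_of_nonneg_right (h i) (mul_self_nonneg _)

lemma quad_lower (hM : M.PosDef) {lmin : ℝ}
    (h : ∀ i, lmin ≤ hM.isHermitian.eigenvalues i) (x : Fin N → ℝ) :
    lmin * (x ⬝ᵥ x) ≤ x ⬝ᵥ M *ᵥ x := by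
  rw [quad_eq hM.isHermitian x, dot_eq hM.isHermitian x, Finset.mul_sum]
  exact Finset.sum_le_sum fun i _ =>
    mul_le_mul_of_nonneg_right (h i) (mul_self_nonneg _)

/-- The key spectral estimate: the sum of the `M`-norms of the block restrictions of `A`
is at most `κ = lmax/lmin` times the `M`-norm of `A`. -/
lemma sum_block_le {n : ℕ} (hM : M.PosDef)
    {lmax lmin : ℝ} (hle : ∀ i, hM.isHermitian.eigenvalues i ≤ lmax)
    (hge : ∀ i, lmin ≤ hM.isHermitian.eigenvalues i) (hlmin : 0 < lmin) (hlmax : 0 ≤ lmax)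
    (b : Fin N → Fin n) (A : Matrix (Fin N) (Fin p) ℝ) :
    ∑ i, Mnorm2 M (blockRestrict b i A) ≤ (lmax / lmin) * Mnorm2 M A := by
  classical
  set F : Matrix (Fin N) (Fin p) ℝ → ℝ :=
    fun X => ∑ l, (fun j => X j l) ⬝ᵥ (fun j => X j l) with hF
  have hup : ∀ X : Matrix (Fin N) (Fin p) ℝ, Mnorm2 M X ≤ lmax * F X := by
    intro X
    rw [Mnorm2_col_sum, hF, Finset.mul_sum]
    exact Finset.sum_le_sum fun l _ => quad_upper hM hle _
  have hlo : ∀ X : Matrix (Fin N) (Fin p) ℝ, lmin * F X ≤ Mnorm2 M X := by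
    intro X
    rw [Mnorm2_col_sum, hF, Finset.mul_sum]
    exact Finset.sum_le_sum fun l _ => quad_lower hM hge _
  have hsplit : ∑ i, F (blockRestrict b i A) = F A := by
    simp only [hF, dotProduct, blockRestrict, Matrix.of_apply]
    rw [Finset.sum_comm]
    refine Finset.sum_congr rfl fun l _ => ?_
    rw [Finset.sum_comm]
    refine Finset.sum_congr rfl fun j _ => ?_
    have hione : ∀ i : Fin n, (if b j = i then A j l else 0) * (if b j = i then A j l else 0)
        = if b j = i then A j l * A j l else 0 := fun i => by split <;> simp
    rw [Finset.sum_congr rfl fun i _ => hione i]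
    simp [Finset.sum_ite_eq]
  calc ∑ i, Mnorm2 M (blockRestrict b i A)
      ≤ ∑ i, lmax * F (blockRestrict b i A) := Finset.sum_le_sum fun i _ => hup _
    _ = lmax * F A := by rw [← Finset.mul_sum, hsplit]
    _ ≤ lmax * (Mnorm2 M A / lmin) := by
        refine mul_le_mul_of_nonneg_left ?_ hlmax
        rw [le_div_iff₀ hlmin]
        linarith [hlo A]
    _ = (lmax / lmin) * Mnorm2 M A := by ring

end Async

set_option maxHeartbeats 1000000 in
open Async in
/-- **Fundamental one-step inequality of the asynchronous algorithm.**
`M` is symmetric positive definite with extreme eigenvalues `lmax, lmin`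
(condition number `κ = lmax/lmin`); rows are partitioned into `n` blocks by the
surjective map `b`; `T` is nonexpansive in the `M`-norm with residual `S = I - T`;
`Zstar` is a fixed point of `T`; `q i > 0` sum to one with minimum `qmin`;
`Ẑ = Z^k + Σ_{d∈J}(Z^d - Z^{d+1})` is the delayed iterate with
`J ⊆ {k-τ,…,k-1}`; and `Z̄ = Z^k - η·SẐ` is the virtual full update.  Then for
every `ξ > 0`, the weighted average over the agent `i` performing the update
`Z^{k+1} = Z^k - (η/(n qᵢ))·SᵢẐ` satisfies
`Σᵢ qᵢ ‖Z^{k+1,i} - Z*‖²_M ≤ ‖Z^k - Z*‖²_M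
  + (ξ/n) Σ_{d=k-τ}^{k-1} ‖Z^d - Z^{d+1}‖²_M
  + (1/n)(τ/ξ + κ/(n qmin) - 1/η) ‖Z^k - Z̄‖²_M`. -/
theorem fundamental_one_step_inequality (N p n : ℕ)
    (M : Matrix (Fin N) (Fin N) ℝ) (hM : M.PosDef)
    (lmax lmin : ℝ)
    (hlmax : IsGreatest (Set.range hM.isHermitian.eigenvalues) lmax)
    (hlmin : IsLeast (Set.range hM.isHermitian.eigenvalues) lmin)
    (b : Fin N → Fin n) (hb : Function.Surjective b)
    (T : Matrix (Fin N) (Fin p) ℝ → Matrix (Fin N) (Fin p) ℝ)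
    (hT : ∀ X Y : Matrix (Fin N) (Fin p) ℝ,
      Mnorm2 M (T X - T Y) ≤ Mnorm2 M (X - Y))
    (Zstar : Matrix (Fin N) (Fin p) ℝ) (hfix : T Zstar = Zstar)
    (q : Fin n → ℝ) (hq : ∀ i, 0 < q i) (hqsum : ∑ i, q i = 1)
    (qmin : ℝ) (hqmin : IsLeast (Set.range q) qmin)
    (τ k : ℕ) (hτk : τ ≤ k)
    (Z : ℕ → Matrix (Fin N) (Fin p) ℝ)
    (J : Finset ℕ) (hJ : J ⊆ Finset.Ico (k - τ) k)
    (Zhat : Matrix (Fin N) (Fin p) ℝ)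
    (hZhat : Zhat = Z k + ∑ d ∈ J, (Z d - Z (d + 1)))
    (η : ℝ) (hη : 0 < η)
    (Zbar : Matrix (Fin N) (Fin p) ℝ)
    (hZbar : Zbar = Z k - η • (Zhat - T Zhat))
    (ξ : ℝ) (hξ : 0 < ξ) :
    ∑ i, q i *
        Mnorm2 M (Z k - (η / ((n : ℝ) * q i)) • blockRestrict b i (Zhat - T Zhat) - Zstar)
      ≤ Mnorm2 M (Z k - Zstar)
        + (ξ / (n : ℝ)) * ∑ d ∈ Finset.Ico (k - τ) k, Mnorm2 M (Z d - Z (d + 1))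
        + (1 / (n : ℝ)) * ((τ : ℝ) / ξ + (lmax / lmin) / ((n : ℝ) * qmin) - 1 / η)
            * Mnorm2 M (Z k - Zbar) := by
  classical
  -- basic positivity and symmetry facts
  have hMs : Mᵀ = M := by
    ext i j
    simpa [Matrix.conjTranspose_apply] using congrFun (congrFun hM.isHermitian i) j
  obtain ⟨imin, himin⟩ := hlmin.1
  have hev_le : ∀ i, hM.isHermitian.eigenvalues i ≤ lmax := fun i => hlmax.2 ⟨i, rfl⟩
  have hev_ge : ∀ i, lmin ≤ hM.isHermitian.eigenvalues i := fun i => hlmin.2 ⟨i, rfl⟩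
  have hlminpos : 0 < lmin := himin ▸ hM.eigenvalues_pos imin
  have hlmaxpos : 0 < lmax := hlminpos.trans_le (himin ▸ hev_le imin)
  obtain ⟨iq, hiq⟩ := hqmin.1
  have hqminpos : 0 < qmin := hiq ▸ hq iq
  have hnpos : 0 < n := by
    rcases Nat.eq_zero_or_pos n with h0 | h0
    · subst h0
      rw [Finset.univ_eq_empty, Finset.sum_empty] at hqsum
      exact absurd hqsum (by norm_num)
    · exact h0
  have hnR : (0 : ℝ) < (n : ℝ) := Nat.cast_pos.mpr hnpos
  have hn0 : ((n : ℝ)) ≠ 0 := hnR.ne'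
  set SZ : Matrix (Fin N) (Fin p) ℝ := Zhat - T Zhat with hSZ
  have hHn : (0 : ℝ) ≤ Mnorm2 M SZ := Mnorm2_nonneg M hM _
  have hZb : Mnorm2 M (Z k - Zbar) = η ^ 2 * Mnorm2 M SZ := by
    rw [hZbar, sub_sub_cancel, Mnorm2_smul]
  rw [hZb]
  -- expansion of each summand
  have key1 : ∀ i, q i *
      Mnorm2 M (Z k - (η / ((n : ℝ) * q i)) • blockRestrict b i SZ - Zstar)
      = q i * Mnorm2 M (Z k - Zstar)
        - (2 * η / (n : ℝ)) * Minner M (Z k - Zstar) (blockRestrict b i SZ)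
        + (η ^ 2 / ((n : ℝ) ^ 2)) * ((1 / q i) * Mnorm2 M (blockRestrict b i SZ)) := by
    intro i
    have hqi : q i ≠ 0 := (hq i).ne'
    rw [sub_right_comm, Mnorm2_sub M hMs, Minner_smul_right, Mnorm2_smul]
    field_simp
  rw [Finset.sum_congr rfl fun i _ => key1 i]
  rw [Finset.sum_add_distrib, Finset.sum_sub_distrib, ← Finset.sum_mul, hqsum, one_mul,
    ← Finset.mul_sum, ← Finset.mul_sum, ← Minner_sum_right]
  have hRsum : (∑ i, blockRestrict b i SZ) = SZ := by
    ext j l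
    rw [Matrix.sum_apply]
    simp [blockRestrict, Finset.sum_ite_eq]
  rw [hRsum]
  -- spectral bound on the weighted block sum
  have bound1 : ∑ i, (1 / q i) * Mnorm2 M (blockRestrict b i SZ)
      ≤ (1 / qmin) * ((lmax / lmin) * Mnorm2 M SZ) := by
    calc ∑ i, (1 / q i) * Mnorm2 M (blockRestrict b i SZ)
        ≤ ∑ i, (1 / qmin) * Mnorm2 M (blockRestrict b i SZ) := by
          refine Finset.sum_le_sum fun i _ => ?_
          exact mul_le_mul_of_nonneg_right
            (one_div_le_one_div_of_le hqminpos (hqmin.2 ⟨i, rfl⟩))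
            (Mnorm2_nonneg M hM _)
      _ = (1 / qmin) * ∑ i, Mnorm2 M (blockRestrict b i SZ) := by rw [Finset.mul_sum]
      _ ≤ (1 / qmin) * ((lmax / lmin) * Mnorm2 M SZ) := by
          refine mul_le_mul_of_nonneg_left ?_ (by positivity)
          exact sum_block_le hM hev_le hev_ge hlminpos hlmaxpos.le b SZ
  -- firm nonexpansiveness at the fixed point
  have hfirm : Mnorm2 M SZ ≤ 2 * Minner M (Zhat - Zstar) SZ := by
    have hne := hT Zhat Zstar
    rw [hfix] at hne
    have he : T Zhat - Zstar = (Zhat - Zstar) - SZ := by rw [hSZ]; abel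
    rw [he, Mnorm2_sub M hMs] at hne
    linarith
  -- Young's inequality for each delay term
  have hyoung : ∀ d : ℕ, 2 * η * Minner M (Z d - Z (d + 1)) SZ
      ≤ ξ * Mnorm2 M (Z d - Z (d + 1)) + (η ^ 2 / ξ) * Mnorm2 M SZ := by
    intro d
    have h0 : 0 ≤ Mnorm2 M (ξ • (Z d - Z (d + 1)) - η • SZ) := Mnorm2_nonneg M hM _
    rw [Mnorm2_sub M hMs, Mnorm2_smul, Mnorm2_smul, Minner_smul_left, Minner_smul_right] at h0
    have hmul : (2 * η * Minner M (Z d - Z (d + 1)) SZ) * ξ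
        ≤ (ξ * Mnorm2 M (Z d - Z (d + 1)) + (η ^ 2 / ξ) * Mnorm2 M SZ) * ξ := by
      have hrhs : (ξ * Mnorm2 M (Z d - Z (d + 1)) + (η ^ 2 / ξ) * Mnorm2 M SZ) * ξ
          = ξ ^ 2 * Mnorm2 M (Z d - Z (d + 1)) + η ^ 2 * Mnorm2 M SZ := by
        field_simp
      rw [hrhs]
      nlinarith [h0]
    exact le_of_mul_le_mul_right hmul hξ
  -- the cross term bound
  have hAJ : ∑ d ∈ J, Mnorm2 M (Z d - Z (d + 1))
      ≤ ∑ d ∈ Finset.Ico (k - τ) k, Mnorm2 M (Z d - Z (d + 1)) :=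
    Finset.sum_le_sum_of_subset_of_nonneg hJ fun d _ _ => Mnorm2_nonneg M hM _
  have hJcard : (J.card : ℝ) ≤ (τ : ℝ) := by
    have h1 := Finset.card_le_card hJ
    rw [Nat.card_Ico] at h1
    exact_mod_cast h1.trans (by omega)
  have hcross : -(2 * η) * Minner M (Z k - Zstar) SZ
      ≤ ξ * (∑ d ∈ Finset.Ico (k - τ) k, Mnorm2 M (Z d - Z (d + 1)))
        + ((τ : ℝ) * (η ^ 2 / ξ) - η) * Mnorm2 M SZ := by
    have hWsplit : Minner M (Z k - Zstar) SZ
        = -(∑ d ∈ J, Minner M (Z d - Z (d + 1)) SZ) + Minner M (Zhat - Zstar) SZ := by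
      have hW : Z k - Zstar = (-(∑ d ∈ J, (Z d - Z (d + 1)))) + (Zhat - Zstar) := by
        rw [hZhat]; abel
      rw [hW, Minner_add_left, Minner_neg_left, Minner_sum_left]
    have hsumJ : ∑ d ∈ J, (2 * η * Minner M (Z d - Z (d + 1)) SZ)
        ≤ ξ * (∑ d ∈ J, Mnorm2 M (Z d - Z (d + 1))) + (J.card : ℝ) * ((η ^ 2 / ξ) * Mnorm2 M SZ) := by
      calc ∑ d ∈ J, (2 * η * Minner M (Z d - Z (d + 1)) SZ)
          ≤ ∑ d ∈ J, (ξ * Mnorm2 M (Z d - Z (d + 1)) + (η ^ 2 / ξ) * Mnorm2 M SZ) :=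
            Finset.sum_le_sum fun d _ => hyoung d
        _ = ξ * (∑ d ∈ J, Mnorm2 M (Z d - Z (d + 1)))
            + (J.card : ℝ) * ((η ^ 2 / ξ) * Mnorm2 M SZ) := by
            rw [Finset.sum_add_distrib, ← Finset.mul_sum, Finset.sum_const, nsmul_eq_mul]
    have h2S : 2 * η * (∑ d ∈ J, Minner M (Z d - Z (d + 1)) SZ)
        = ∑ d ∈ J, (2 * η * Minner M (Z d - Z (d + 1)) SZ) := by rw [Finset.mul_sum]
    have hE : η * Mnorm2 M SZ ≤ η * (2 * Minner M (Zhat - Zstar) SZ) :=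
      mul_le_mul_of_nonneg_left hfirm hη.le
    have hC : (J.card : ℝ) * ((η ^ 2 / ξ) * Mnorm2 M SZ)
        ≤ (τ : ℝ) * ((η ^ 2 / ξ) * Mnorm2 M SZ) :=
      mul_le_mul_of_nonneg_right hJcard (by positivity)
    have hxA : ξ * (∑ d ∈ J, Mnorm2 M (Z d - Z (d + 1)))
        ≤ ξ * (∑ d ∈ Finset.Ico (k - τ) k, Mnorm2 M (Z d - Z (d + 1))) :=
      mul_le_mul_of_nonneg_left hAJ hξ.le
    rw [hWsplit]
    linarith [hsumJ, h2S, hE, hC, hxA]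
  -- assemble everything
  have t1 : -((2 * η / (n : ℝ)) * Minner M (Z k - Zstar) SZ)
      ≤ (1 / (n : ℝ)) * (ξ * (∑ d ∈ Finset.Ico (k - τ) k, Mnorm2 M (Z d - Z (d + 1)))
        + ((τ : ℝ) * (η ^ 2 / ξ) - η) * Mnorm2 M SZ) := by
    have h1 := mul_le_mul_of_nonneg_left hcross (by positivity : (0 : ℝ) ≤ 1 / (n : ℝ))
    calc -((2 * η / (n : ℝ)) * Minner M (Z k - Zstar) SZ)
        = (1 / (n : ℝ)) * (-(2 * η) * Minner M (Z k - Zstar) SZ) := by ring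
      _ ≤ _ := h1
  have t2 : (η ^ 2 / ((n : ℝ) ^ 2)) * ∑ i, (1 / q i) * Mnorm2 M (blockRestrict b i SZ)
      ≤ (η ^ 2 / ((n : ℝ) ^ 2)) * ((1 / qmin) * ((lmax / lmin) * Mnorm2 M SZ)) :=
    mul_le_mul_of_nonneg_left bound1 (by positivity)
  have final_eq : Mnorm2 M (Z k - Zstar)
      + (1 / (n : ℝ)) * (ξ * (∑ d ∈ Finset.Ico (k - τ) k, Mnorm2 M (Z d - Z (d + 1)))
        + ((τ : ℝ) * (η ^ 2 / ξ) - η) * Mnorm2 M SZ)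
      + (η ^ 2 / ((n : ℝ) ^ 2)) * ((1 / qmin) * ((lmax / lmin) * Mnorm2 M SZ))
      = Mnorm2 M (Z k - Zstar)
        + (ξ / (n : ℝ)) * ∑ d ∈ Finset.Ico (k - τ) k, Mnorm2 M (Z d - Z (d + 1))
        + (1 / (n : ℝ)) * ((τ : ℝ) / ξ + (lmax / lmin) / ((n : ℝ) * qmin) - 1 / η)
            * (η ^ 2 * Mnorm2 M SZ) := by
    field_simp
    ring
  linarith [t1, t2, final_eq]
end

section
/- Assume: (a) M ∈ ℝ^{N×N} is symmetric positive definite with condition number κ and M-norm ‖Z‖_M² = tr(Zᵀ M Z) on ℝ^{N×p}; (b) the row indices {1,…,N} are partitioned into n nonempty disjoint blocks, T : ℝ^{N×p} → ℝ^{N×p} is nonexpansive with respect to ‖·‖_M, S = I − T, and S_i Ẑ denotes the block-i restriction of S Ẑ (zero outside block i); (c) Z* satisfies TZ* = Z*; (d) q_1,…,q_n > 0 satisfy Σ_i q_i = 1, and q_min = min_i q_i; (e) τ ≥ 1 is an integer, Z^{k−τ},…,Z^k ∈ ℝ^{N×p}, J ⊆ {k−τ,…,k−1}, and Ẑ = Z^k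 + Σ_{d∈J}(Z^d − Z^{d+1}); (f) η > 0 and Z̄ = Z^k − η·SẐ. Set c = √(q_min/κ) and define the Lyapunov value Φ = ‖Z^k − Z*‖_M² + c·Σ_{d=k−τ}^{k−1} (d−(k−τ)+1)·‖Z^d − Z^{d+1}‖_M². For each i let Z^{k+1,i} = Z^k − (η/(n q_i)) S_i Ẑ. Then Σ_{i=1}^n q_i · [ ‖Z^{k+1,i} − Z*‖_M² + c·Σ_{d=k+1−τ}^{k−1} (d−(k+1−τ)+1)·‖Z^d − Z^{d+1}‖_M² + c·τ·‖Z^k − Z^{k+1,i}‖_M² ] ≤ Φ − (1/n)·( 1/η − 2τ√κ/(n√q_min) − κ/(n q_min) )·‖Z̄ − Z^k‖_M². -/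
open Matrix

noncomputable def Minn {N p : ℕ} (M : Matrix (Fin N) (Fin N) ℝ)
    (X Y : Matrix (Fin N) (Fin p) ℝ) : ℝ := (Xᵀ * M * Y).trace

variable {N p n : ℕ} {M : Matrix (Fin N) (Fin N) ℝ}

lemma Mnorm2_eq_inn (Z : Matrix (Fin N) (Fin p) ℝ) : Mnorm2 M Z = Minn M Z Z := rfl

lemma Minn_symm (hM : Mᵀ = M) (X Y : Matrix (Fin N) (Fin p) ℝ) :
    Minn M X Y = Minn M Y X := by
  unfold Minn
  rw [← Matrix.trace_transpose, Matrix.transpose_mul, Matrix.transpose_mul,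
    transpose_transpose, hM, ← Matrix.mul_assoc]

lemma Minn_add_right (X Y W : Matrix (Fin N) (Fin p) ℝ) :
    Minn M X (Y + W) = Minn M X Y + Minn M X W := by
  unfold Minn; rw [Matrix.mul_add, trace_add]

lemma Minn_sub_right (X Y W : Matrix (Fin N) (Fin p) ℝ) :
    Minn M X (Y - W) = Minn M X Y - Minn M X W := by
  unfold Minn; rw [Matrix.mul_sub, trace_sub]

lemma Minn_smul_right (a : ℝ) (X Y : Matrix (Fin N) (Fin p) ℝ) :
    Minn M X (a • Y) = a * Minn M X Y := by
  unfold Minn; rw [Matrix.mul_smul, trace_smul, smul_eq_mul]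

lemma Minn_sub_left (X W Y : Matrix (Fin N) (Fin p) ℝ) :
    Minn M (X - W) Y = Minn M X Y - Minn M W Y := by
  unfold Minn; rw [Matrix.transpose_sub, Matrix.sub_mul, Matrix.sub_mul, trace_sub]

lemma Minn_sum_right {α : Type*} (s : Finset α) (X : Matrix (Fin N) (Fin p) ℝ)
    (f : α → Matrix (Fin N) (Fin p) ℝ) :
    Minn M X (∑ d ∈ s, f d) = ∑ d ∈ s, Minn M X (f d) := by
  unfold Minn; rw [Matrix.mul_sum, trace_sum]

lemma Minn_smul_left (a : ℝ) (X Y : Matrix (Fin N) (Fin p) ℝ) :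
    Minn M (a • X) Y = a * Minn M X Y := by
  unfold Minn
  rw [Matrix.transpose_smul, Matrix.smul_mul, Matrix.smul_mul, trace_smul, smul_eq_mul]

lemma Mnorm2_sub_smul (hM : Mᵀ = M) (X Y : Matrix (Fin N) (Fin p) ℝ) (a : ℝ) :
    Mnorm2 M (X - a • Y)
      = Mnorm2 M X - 2 * a * Minn M X Y + a ^ 2 * Mnorm2 M Y := by
  simp only [Mnorm2_eq_inn, Minn_sub_left, Minn_sub_right, Minn_smul_left, Minn_smul_right,
    Minn_symm hM Y X]
  ring

lemma Mnorm2_smul (a : ℝ) (Y : Matrix (Fin N) (Fin p) ℝ) :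
    Mnorm2 M (a • Y) = a ^ 2 * Mnorm2 M Y := by
  unfold Mnorm2
  rw [Matrix.transpose_smul, Matrix.smul_mul, Matrix.smul_mul, Matrix.mul_smul, trace_smul,
    trace_smul, smul_eq_mul, smul_eq_mul]
  ring

lemma Mnorm2_col (Z : Matrix (Fin N) (Fin p) ℝ) :
    Mnorm2 M Z = ∑ l, (fun j => Z j l) ⬝ᵥ (M *ᵥ (fun j => Z j l)) := by
  unfold Mnorm2
  simp only [Matrix.trace, Matrix.diag, Matrix.mul_apply, dotProduct, Matrix.mulVec,
    Matrix.transpose_apply, Finset.mul_sum, Finset.sum_mul]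
  refine Finset.sum_congr rfl fun l _ => ?_
  rw [Finset.sum_comm]
  exact Finset.sum_congr rfl fun j _ => Finset.sum_congr rfl fun j' _ => by ring

lemma Mnorm2_nonneg (hM : M.PosSemidef) (Z : Matrix (Fin N) (Fin p) ℝ) :
    0 ≤ Mnorm2 M Z := by
  rw [Mnorm2_col]
  refine Finset.sum_nonneg fun l _ => ?_
  simpa using hM.dotProduct_mulVec_nonneg (fun j => Z j l)

lemma shifted_posSemidef (hM : M.PosDef) {lmax : ℝ}
    (hub : ∀ i, hM.isHermitian.eigenvalues i ≤ lmax) :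
    (lmax • (1 : Matrix (Fin N) (Fin N) ℝ) - M).PosSemidef := by
  have hspec := hM.isHermitian.spectral_theorem
  set U := (hM.isHermitian.eigenvectorUnitary : Matrix (Fin N) (Fin N) ℝ) with hUdef
  have hU : U * star U = 1 :=
    (Matrix.mem_unitaryGroup_iff).mp hM.isHermitian.eigenvectorUnitary.2
  have key : lmax • (1 : Matrix (Fin N) (Fin N) ℝ) - M
      = U * (Matrix.diagonal (fun i => lmax - hM.isHermitian.eigenvalues i)) * star U := by
    have hdiag : Matrix.diagonal (fun i => lmax - hM.isHermitian.eigenvalues i)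
        = lmax • (1 : Matrix (Fin N) (Fin N) ℝ)
          - Matrix.diagonal (RCLike.ofReal ∘ hM.isHermitian.eigenvalues) := by
      ext i j
      rcases eq_or_ne i j with h | h <;>
        simp [Matrix.diagonal_apply, Matrix.one_apply, h, Matrix.smul_apply]
    simp only [Unitary.conjStarAlgAut_apply, Unitary.coe_star, ← hUdef] at hspec
    rw [hdiag, Matrix.mul_sub, Matrix.sub_mul, ← hspec]
    congr 1
    rw [Matrix.mul_smul, Matrix.mul_one, Matrix.smul_mul, hU]
  rw [key]
  have hpsd : (Matrix.diagonal (fun i => lmax - hM.isHermitian.eigenvalues i)).PosSemidef :=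
    Matrix.PosSemidef.diagonal (fun i => sub_nonneg.2 (hub i))
  simpa [Matrix.star_eq_conjTranspose] using hpsd.mul_mul_conjTranspose_same U

lemma shifted_posSemidef' (hM : M.PosDef) {lmin : ℝ}
    (hlb : ∀ i, lmin ≤ hM.isHermitian.eigenvalues i) :
    (M - lmin • (1 : Matrix (Fin N) (Fin N) ℝ)).PosSemidef := by
  have hspec := hM.isHermitian.spectral_theorem
  set U := (hM.isHermitian.eigenvectorUnitary : Matrix (Fin N) (Fin N) ℝ) with hUdef
  have hU : U * star U = 1 :=
    (Matrix.mem_unitaryGroup_iff).mp hM.isHermitian.eigenvectorUnitary.2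
  have key : M - lmin • (1 : Matrix (Fin N) (Fin N) ℝ)
      = U * (Matrix.diagonal (fun i => hM.isHermitian.eigenvalues i - lmin)) * star U := by
    have hdiag : Matrix.diagonal (fun i => hM.isHermitian.eigenvalues i - lmin)
        = Matrix.diagonal (RCLike.ofReal ∘ hM.isHermitian.eigenvalues)
          - lmin • (1 : Matrix (Fin N) (Fin N) ℝ) := by
      ext i j
      rcases eq_or_ne i j with h | h <;>
        simp [Matrix.diagonal_apply, Matrix.one_apply, h, Matrix.smul_apply]
    simp only [Unitary.conjStarAlgAut_apply, Unitary.coe_star, ← hUdef] at hspec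
    rw [hdiag, Matrix.mul_sub, Matrix.sub_mul, ← hspec]
    congr 1
    rw [Matrix.mul_smul, Matrix.mul_one, Matrix.smul_mul, hU]
  rw [key]
  have hpsd : (Matrix.diagonal (fun i => hM.isHermitian.eigenvalues i - lmin)).PosSemidef :=
    Matrix.PosSemidef.diagonal (fun i => sub_nonneg.2 (hlb i))
  simpa [Matrix.star_eq_conjTranspose] using hpsd.mul_mul_conjTranspose_same U

lemma Mnorm2_le_lmax {lmax : ℝ} (hM : M.PosDef)
    (hub : ∀ i, hM.isHermitian.eigenvalues i ≤ lmax) (Z : Matrix (Fin N) (Fin p) ℝ) :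
    Mnorm2 M Z ≤ lmax * Mnorm2 1 Z := by
  have h := Mnorm2_nonneg (shifted_posSemidef hM hub) Z
  simp only [Mnorm2_col] at h ⊢
  have expand : ∀ l : Fin p,
      (fun j => Z j l) ⬝ᵥ ((lmax • (1 : Matrix (Fin N) (Fin N) ℝ) - M) *ᵥ (fun j => Z j l))
      = lmax * ((fun j => Z j l) ⬝ᵥ ((1 : Matrix (Fin N) (Fin N) ℝ) *ᵥ fun j => Z j l))
        - (fun j => Z j l) ⬝ᵥ (M *ᵥ fun j => Z j l) := by
    intro l
    rw [Matrix.sub_mulVec, dotProduct_sub, Matrix.smul_mulVec, dotProduct_smul,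
      smul_eq_mul]
  simp only [expand, Finset.sum_sub_distrib, ← Finset.mul_sum] at h
  linarith [h]

lemma lmin_Mnorm2_le {lmin : ℝ} (hM : M.PosDef)
    (hlb : ∀ i, lmin ≤ hM.isHermitian.eigenvalues i) (Z : Matrix (Fin N) (Fin p) ℝ) :
    lmin * Mnorm2 1 Z ≤ Mnorm2 M Z := by
  have h := Mnorm2_nonneg (shifted_posSemidef' hM hlb) Z
  simp only [Mnorm2_col] at h ⊢
  have expand : ∀ l : Fin p,
      (fun j => Z j l) ⬝ᵥ ((M - lmin • (1 : Matrix (Fin N) (Fin N) ℝ)) *ᵥ (fun j => Z j l))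
      = (fun j => Z j l) ⬝ᵥ (M *ᵥ fun j => Z j l)
        - lmin * ((fun j => Z j l) ⬝ᵥ ((1 : Matrix (Fin N) (Fin N) ℝ) *ᵥ fun j => Z j l)) := by
    intro l
    rw [Matrix.sub_mulVec, dotProduct_sub, Matrix.smul_mulVec, dotProduct_smul,
      smul_eq_mul]
  simp only [expand, Finset.sum_sub_distrib, ← Finset.mul_sum] at h
  linarith [h]

lemma fro_eq (Z : Matrix (Fin N) (Fin p) ℝ) :
    Mnorm2 1 Z = ∑ l, ∑ j, (Z j l) ^ 2 := by
  rw [Mnorm2_col]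
  refine Finset.sum_congr rfl fun l _ => ?_
  rw [Matrix.one_mulVec]
  simp [dotProduct, sq]

lemma sum_blockRestrict {n : ℕ} (b : Fin N → Fin n) (A : Matrix (Fin N) (Fin p) ℝ) :
    ∑ i, blockRestrict b i A = A := by
  ext j l
  rw [Matrix.sum_apply]
  simp [blockRestrict]

lemma sum_fro_blockRestrict {n : ℕ} (b : Fin N → Fin n) (A : Matrix (Fin N) (Fin p) ℝ) :
    ∑ i, Mnorm2 1 (blockRestrict b i A) = Mnorm2 1 A := by
  simp only [fro_eq]
  rw [Finset.sum_comm]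
  refine Finset.sum_congr rfl fun l _ => ?_
  rw [Finset.sum_comm]
  refine Finset.sum_congr rfl fun j _ => ?_
  simp [blockRestrict, apply_ite (· ^ 2 : ℝ → ℝ)]

set_option maxHeartbeats 1000000 in
/-- **Fundamental inequality in the U-metric** (Theorem 3 of the paper).  With
`c = √(qmin/κ)` and the Lyapunov value
`Φ = ‖Z^k - Z*‖²_M + c Σ_{d=k-τ}^{k-1} (d-(k-τ)+1)‖Z^d - Z^{d+1}‖²_M`,
the expected squared U-distance after the update
`Z^{k+1,i} = Z^k - (η/(n qᵢ)) SᵢẐ` by a random agent `i` satisfies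
`Σᵢ qᵢ [ ‖Z^{k+1,i} - Z*‖²_M + c Σ_{d=k+1-τ}^{k-1} (d-(k+1-τ)+1)‖Z^d - Z^{d+1}‖²_M
        + c τ ‖Z^k - Z^{k+1,i}‖²_M ]
  ≤ Φ - (1/n)(1/η - 2τ√κ/(n√qmin) - κ/(n qmin)) ‖Z̄ - Z^k‖²_M`. -/
theorem fundamental_inequality_U_metric (N p n : ℕ)
    (M : Matrix (Fin N) (Fin N) ℝ) (hM : M.PosDef)
    (lmax lmin : ℝ)
    (hlmax : IsGreatest (Set.range hM.isHermitian.eigenvalues) lmax)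
    (hlmin : IsLeast (Set.range hM.isHermitian.eigenvalues) lmin)
    (b : Fin N → Fin n) (hb : Function.Surjective b)
    (T : Matrix (Fin N) (Fin p) ℝ → Matrix (Fin N) (Fin p) ℝ)
    (hT : ∀ X Y : Matrix (Fin N) (Fin p) ℝ,
      Mnorm2 M (T X - T Y) ≤ Mnorm2 M (X - Y))
    (Zstar : Matrix (Fin N) (Fin p) ℝ) (hfix : T Zstar = Zstar)
    (q : Fin n → ℝ) (hq : ∀ i, 0 < q i) (hqsum : ∑ i, q i = 1)
    (qmin : ℝ) (hqmin : IsLeast (Set.range q) qmin)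
    (τ k : ℕ) (hτ : 1 ≤ τ) (hτk : τ ≤ k)
    (Z : ℕ → Matrix (Fin N) (Fin p) ℝ)
    (J : Finset ℕ) (hJ : J ⊆ Finset.Ico (k - τ) k)
    (Zhat : Matrix (Fin N) (Fin p) ℝ)
    (hZhat : Zhat = Z k + ∑ d ∈ J, (Z d - Z (d + 1)))
    (η : ℝ) (hη : 0 < η)
    (Zbar : Matrix (Fin N) (Fin p) ℝ)
    (hZbar : Zbar = Z k - η • (Zhat - T Zhat))
    (c : ℝ) (hc : c = Real.sqrt (qmin / (lmax / lmin)))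
    (Znext : Fin n → Matrix (Fin N) (Fin p) ℝ)
    (hZnext : ∀ i, Znext i = Z k - (η / ((n : ℝ) * q i)) • blockRestrict b i (Zhat - T Zhat))
    (Φ : ℝ)
    (hΦ : Φ = Mnorm2 M (Z k - Zstar)
      + c * ∑ d ∈ Finset.Ico (k - τ) k,
          ((d - (k - τ) + 1 : ℕ) : ℝ) * Mnorm2 M (Z d - Z (d + 1))) :
    ∑ i, q i *
        (Mnorm2 M (Znext i - Zstar)
          + c * ∑ d ∈ Finset.Ico (k + 1 - τ) k,
              ((d - (k + 1 - τ) + 1 : ℕ) : ℝ) * Mnorm2 M (Z d - Z (d + 1))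
          + c * (τ : ℝ) * Mnorm2 M (Z k - Znext i))
      ≤ Φ - (1 / (n : ℝ)) *
          (1 / η - 2 * (τ : ℝ) * Real.sqrt (lmax / lmin) / ((n : ℝ) * Real.sqrt qmin)
            - (lmax / lmin) / ((n : ℝ) * qmin))
          * Mnorm2 M (Zbar - Z k) := by
  classical
  -- basic positivity facts
  obtain ⟨i0, hi0⟩ := hqmin.1
  have hqmin_pos : 0 < qmin := hi0 ▸ hq i0
  have hn0 : n ≠ 0 := fun h => (h ▸ i0).elim0
  have hn : (0 : ℝ) < n := by exact_mod_cast Nat.pos_of_ne_zero hn0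
  obtain ⟨j0, hj0⟩ := hlmin.1
  have hlmin_pos : 0 < lmin := hj0 ▸ hM.eigenvalues_pos j0
  have hub : ∀ i, hM.isHermitian.eigenvalues i ≤ lmax := fun i => hlmax.2 ⟨i, rfl⟩
  have hlb : ∀ i, lmin ≤ hM.isHermitian.eigenvalues i := fun i => hlmin.2 ⟨i, rfl⟩
  have hlmaxmin : lmin ≤ lmax := hlmin.2 hlmax.1
  have hMsymm : Mᵀ = M := by
    have := hM.isHermitian
    rwa [Matrix.IsHermitian, Matrix.conjTranspose_eq_transpose_of_trivial] at this
  set κ := lmax / lmin with hκdef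
  have hκ : 0 < κ := div_pos (lt_of_lt_of_le hlmin_pos hlmaxmin) hlmin_pos
  set γ := Real.sqrt (κ / qmin) with hγdef
  have hlmax_pos : 0 < lmax := lt_of_lt_of_le hlmin_pos hlmaxmin
  have hlminne : lmin ≠ 0 := hlmin_pos.ne'
  have hqminne : qmin ≠ 0 := hqmin_pos.ne'
  have hκne : κ ≠ 0 := hκ.ne'
  have hγ : 0 < γ := Real.sqrt_pos.2 (div_pos hκ hqmin_pos)
  have hγ2 : γ ^ 2 = κ / qmin := Real.sq_sqrt (div_pos hκ hqmin_pos).le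
  have hcγ : c * γ = 1 := by
    rw [hc, hγdef, ← Real.sqrt_mul (div_pos hqmin_pos hκ).le]
    rw [show qmin / κ * (κ / qmin) = 1 by field_simp]
    exact Real.sqrt_one
  have hc0 : 0 ≤ c := hc ▸ Real.sqrt_nonneg _
  have hcinv : c = 1 / γ := (eq_div_iff hγ.ne').2 hcγ
  have hsqrtgamma : Real.sqrt κ = γ * Real.sqrt qmin := by
    have hne : Real.sqrt qmin ≠ 0 := ne_of_gt (Real.sqrt_pos.2 hqmin_pos)
    rw [hγdef, Real.sqrt_div hκ.le]
    exact (div_mul_cancel₀ (Real.sqrt κ) hne).symm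
  -- notation
  set S := Zhat - T Zhat with hSdef
  have hSsum : ∑ i, blockRestrict b i S = S := sum_blockRestrict b S
  set s := Mnorm2 M S with hsdef
  have hs0 : 0 ≤ s := Mnorm2_nonneg hM.posSemidef S
  set Dsum := ∑ d ∈ Finset.Ico (k - τ) k, Mnorm2 M (Z d - Z (d + 1)) with hDsumdef
  have hDsum0 : 0 ≤ Dsum :=
    Finset.sum_nonneg fun d _ => Mnorm2_nonneg hM.posSemidef _
  set A := ∑ i, (1 / q i) * Mnorm2 M (blockRestrict b i S) with hAdef
  set P := Minn M (Z k - Zstar) S with hPdef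
  set ε := η * γ / n with hεdef
  have hε : 0 < ε := div_pos (mul_pos hη hγ) hn
  -- bound on A
  have hA0 : 0 ≤ A := Finset.sum_nonneg fun i _ =>
    mul_nonneg (one_div_nonneg.2 (hq i).le) (Mnorm2_nonneg hM.posSemidef _)
  have hA_le : A ≤ κ / qmin * s := by
    have hstep : ∀ i : Fin n, (1 / q i) * Mnorm2 M (blockRestrict b i S)
        ≤ (1 / qmin) * (lmax * Mnorm2 1 (blockRestrict b i S)) := by
      intro i
      have h1 : Mnorm2 M (blockRestrict b i S) ≤ lmax * Mnorm2 1 (blockRestrict b i S) :=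
        Mnorm2_le_lmax hM hub _
      have h2 : (1 : ℝ) / q i ≤ 1 / qmin :=
        one_div_le_one_div_of_le hqmin_pos (hqmin.2 ⟨i, rfl⟩)
      have h3 : 0 ≤ Mnorm2 M (blockRestrict b i S) := Mnorm2_nonneg hM.posSemidef _
      calc (1 / q i) * Mnorm2 M (blockRestrict b i S)
          ≤ (1 / qmin) * Mnorm2 M (blockRestrict b i S) :=
            mul_le_mul_of_nonneg_right h2 h3
        _ ≤ (1 / qmin) * (lmax * Mnorm2 1 (blockRestrict b i S)) :=
            mul_le_mul_of_nonneg_left h1 (one_div_nonneg.2 hqmin_pos.le)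
    have hF : Mnorm2 1 S ≤ (1 / lmin) * s := by
      have h := lmin_Mnorm2_le hM hlb S
      rw [← hsdef] at h
      have h2 : Mnorm2 1 S ≤ s / lmin := (le_div_iff₀ hlmin_pos).2 (by linarith [h])
      have h3 : s / lmin = (1 / lmin) * s := by ring
      linarith [h2, h3]
    calc A ≤ ∑ i, (1 / qmin) * (lmax * Mnorm2 1 (blockRestrict b i S)) :=
          Finset.sum_le_sum fun i _ => hstep i
      _ = (1 / qmin) * lmax * ∑ i, Mnorm2 1 (blockRestrict b i S) := by
          rw [Finset.mul_sum]; exact Finset.sum_congr rfl fun i _ => by ring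
      _ = (1 / qmin) * lmax * Mnorm2 1 S := by rw [sum_fro_blockRestrict]
      _ ≤ (1 / qmin) * lmax * ((1 / lmin) * s) :=
          mul_le_mul_of_nonneg_left hF
            (mul_nonneg (one_div_nonneg.2 hqmin_pos.le) hlmax_pos.le)
      _ = κ / qmin * s := by rw [hκdef]; ring
  -- nonexpansiveness
  have hfne : s ≤ 2 * Minn M (Zhat - Zstar) S := by
    have h := hT Zhat Zstar
    rw [hfix] at h
    have hexp : T Zhat - Zstar = (Zhat - Zstar) - (1 : ℝ) • S := by
      rw [hSdef, one_smul]; abel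
    rw [hexp, Mnorm2_sub_smul hMsymm] at h
    rw [← hsdef] at h
    nlinarith [h]
  -- cross term
  have hJcard : (J.card : ℝ) ≤ (τ : ℝ) := by
    have h1 := Finset.card_le_card hJ
    rw [Nat.card_Ico] at h1
    have : J.card ≤ τ := by omega
    exact_mod_cast this
  have hcross : 2 * Minn M (Zhat - Z k) S ≤ (1 / ε) * Dsum + ε * (τ : ℝ) * s := by
    have h1 : Zhat - Z k = ∑ d ∈ J, (Z d - Z (d + 1)) := by rw [hZhat]; abel
    have h2 : ∀ d, 2 * Minn M (Z d - Z (d + 1)) S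
        ≤ (1 / ε) * Mnorm2 M (Z d - Z (d + 1)) + ε * s := by
      intro d
      have h0 := Mnorm2_nonneg hM.posSemidef ((Z d - Z (d + 1)) - ε • S)
      rw [Mnorm2_sub_smul hMsymm, ← hsdef] at h0
      have key : 2 * Minn M (Z d - Z (d + 1)) S * ε ≤ Mnorm2 M (Z d - Z (d + 1)) + ε ^ 2 * s := by
        nlinarith [h0]
      calc 2 * Minn M (Z d - Z (d + 1)) S
          = (2 * Minn M (Z d - Z (d + 1)) S * ε) / ε := by field_simp
        _ ≤ (Mnorm2 M (Z d - Z (d + 1)) + ε ^ 2 * s) / ε := by gcongr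
        _ = (1 / ε) * Mnorm2 M (Z d - Z (d + 1)) + ε * s := by field_simp
    have h3 : Minn M (Zhat - Z k) S = ∑ d ∈ J, Minn M (Z d - Z (d + 1)) S := by
      rw [Minn_symm hMsymm, h1, Minn_sum_right]
      exact Finset.sum_congr rfl fun d _ => Minn_symm hMsymm _ _
    have h5 : ∑ d ∈ J, Mnorm2 M (Z d - Z (d + 1)) ≤ Dsum := by
      rw [hDsumdef]
      exact Finset.sum_le_sum_of_subset_of_nonneg hJ
        (fun d _ _ => Mnorm2_nonneg hM.posSemidef _)
    have h4 : ∑ d ∈ J, (2 * Minn M (Z d - Z (d + 1)) S)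
        ≤ (1 / ε) * (∑ d ∈ J, Mnorm2 M (Z d - Z (d + 1))) + (J.card : ℝ) * (ε * s) := by
      calc ∑ d ∈ J, (2 * Minn M (Z d - Z (d + 1)) S)
          ≤ ∑ d ∈ J, ((1 / ε) * Mnorm2 M (Z d - Z (d + 1)) + ε * s) :=
            Finset.sum_le_sum fun d _ => h2 d
        _ = (1 / ε) * (∑ d ∈ J, Mnorm2 M (Z d - Z (d + 1))) + (J.card : ℝ) * (ε * s) := by
            rw [Finset.sum_add_distrib, Finset.mul_sum, Finset.sum_const, nsmul_eq_mul]
    rw [h3]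
    have h6 : (J.card : ℝ) * (ε * s) ≤ (τ : ℝ) * (ε * s) :=
      mul_le_mul_of_nonneg_right hJcard (mul_nonneg hε.le hs0)
    have h7 : (1 / ε) * (∑ d ∈ J, Mnorm2 M (Z d - Z (d + 1))) ≤ (1 / ε) * Dsum :=
      mul_le_mul_of_nonneg_left h5 (one_div_nonneg.2 hε.le)
    calc 2 * ∑ d ∈ J, Minn M (Z d - Z (d + 1)) S
        = ∑ d ∈ J, (2 * Minn M (Z d - Z (d + 1)) S) := by rw [Finset.mul_sum]
      _ ≤ (1 / ε) * (∑ d ∈ J, Mnorm2 M (Z d - Z (d + 1))) + (J.card : ℝ) * (ε * s) := h4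
      _ ≤ (1 / ε) * Dsum + ε * (τ : ℝ) * s := by linarith [h6, h7]
  -- split of P
  have hPsplit : P = Minn M (Zhat - Zstar) S - Minn M (Zhat - Z k) S := by
    rw [hPdef, ← Minn_sub_left]
    congr 1
    abel
  have hP2 : s - (1 / ε) * Dsum - ε * (τ : ℝ) * s ≤ 2 * P := by
    rw [hPsplit]; linarith [hfne, hcross]
  have hηn : (0 : ℝ) < η / n := div_pos hη hn
  have hnne : (n : ℝ) ≠ 0 := hn.ne'
  have hkey1 : (η / n) * s - c * Dsum - (η ^ 2 * γ / (n : ℝ) ^ 2) * (τ : ℝ) * s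
      ≤ (2 * η / n) * P := by
    calc (η / n) * s - c * Dsum - (η ^ 2 * γ / (n : ℝ) ^ 2) * (τ : ℝ) * s
        = (η / n) * (s - (1 / ε) * Dsum - ε * (τ : ℝ) * s) := by
          rw [hεdef, hcinv]; field_simp
      _ ≤ (η / n) * (2 * P) := mul_le_mul_of_nonneg_left hP2 hηn.le
      _ = (2 * η / n) * P := by ring
  have hkey2 : (1 + c * (τ : ℝ)) * (η ^ 2 / (n : ℝ) ^ 2) * A
      ≤ (η ^ 2 / (n : ℝ) ^ 2) * (κ / qmin * s) + (η ^ 2 * γ / (n : ℝ) ^ 2) * (τ : ℝ) * s := by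
    have h1 : (1 + c * (τ : ℝ)) * A ≤ (1 + c * (τ : ℝ)) * (κ / qmin * s) :=
      mul_le_mul_of_nonneg_left hA_le
        (add_nonneg zero_le_one (mul_nonneg hc0 (Nat.cast_nonneg τ)))
    have hcκ : c * (κ / qmin) = γ := by
      rw [← hγ2, hcinv]; field_simp
    have h2 : (1 + c * (τ : ℝ)) * (κ / qmin * s) = κ / qmin * s + (τ : ℝ) * γ * s := by
      linear_combination ((τ : ℝ) * s) * hcκ
    have h3 : (0 : ℝ) ≤ η ^ 2 / (n : ℝ) ^ 2 := by positivity
    calc (1 + c * (τ : ℝ)) * (η ^ 2 / (n : ℝ) ^ 2) * A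
        = (η ^ 2 / (n : ℝ) ^ 2) * ((1 + c * (τ : ℝ)) * A) := by ring
      _ ≤ (η ^ 2 / (n : ℝ) ^ 2) * ((1 + c * (τ : ℝ)) * (κ / qmin * s)) :=
          mul_le_mul_of_nonneg_left h1 h3
      _ = (η ^ 2 / (n : ℝ) ^ 2) * (κ / qmin * s) + (η ^ 2 * γ / (n : ℝ) ^ 2) * (τ : ℝ) * s := by
          rw [h2]; ring
  -- sums
  set newsum := ∑ d ∈ Finset.Ico (k + 1 - τ) k,
      ((d - (k + 1 - τ) + 1 : ℕ) : ℝ) * Mnorm2 M (Z d - Z (d + 1)) with hnewsumdef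
  set oldsum := ∑ d ∈ Finset.Ico (k - τ) k,
      ((d - (k - τ) + 1 : ℕ) : ℝ) * Mnorm2 M (Z d - Z (d + 1)) with holdsumdef
  have ha : k + 1 - τ = (k - τ) + 1 := by omega
  have hlt : k - τ < k := by omega
  have hshift : newsum = oldsum - Dsum := by
    rw [hnewsumdef, holdsumdef, hDsumdef]
    simp only [ha]
    rw [Finset.sum_eq_sum_Ico_succ_bot hlt
        (fun d => ((d - (k - τ) + 1 : ℕ) : ℝ) * Mnorm2 M (Z d - Z (d + 1))),
      Finset.sum_eq_sum_Ico_succ_bot hlt (fun d => Mnorm2 M (Z d - Z (d + 1)))]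
    have hterm : ∀ d ∈ Finset.Ico ((k - τ) + 1) k,
        ((d - (k - τ) + 1 : ℕ) : ℝ) * Mnorm2 M (Z d - Z (d + 1))
        = ((d - ((k - τ) + 1) + 1 : ℕ) : ℝ) * Mnorm2 M (Z d - Z (d + 1))
          + Mnorm2 M (Z d - Z (d + 1)) := by
      intro d hd
      rw [Finset.mem_Ico] at hd
      have hco : d - (k - τ) + 1 = (d - ((k - τ) + 1) + 1) + 1 := by omega
      rw [hco]
      push_cast
      ring
    rw [Finset.sum_congr rfl hterm, Finset.sum_add_distrib]
    simp
  -- the expectation identity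
  have h1i : ∀ i : Fin n, Znext i - Zstar
      = (Z k - Zstar) - (η / ((n : ℝ) * q i)) • blockRestrict b i S := by
    intro i; rw [hZnext i]; abel
  have h2i : ∀ i : Fin n, Z k - Znext i = (η / ((n : ℝ) * q i)) • blockRestrict b i S := by
    intro i; rw [hZnext i]; exact sub_sub_cancel _ _
  have key_i : ∀ i : Fin n,
      q i * (Mnorm2 M (Znext i - Zstar) + c * newsum
        + c * (τ : ℝ) * Mnorm2 M (Z k - Znext i))
      = q i * (Mnorm2 M (Z k - Zstar)) + (c * newsum) * q i
        - (2 * η / n) * Minn M (Z k - Zstar) (blockRestrict b i S)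
        + ((1 + c * (τ : ℝ)) * (η ^ 2 / (n : ℝ) ^ 2))
            * ((1 / q i) * Mnorm2 M (blockRestrict b i S)) := by
    intro i
    rw [h1i i, h2i i, Mnorm2_sub_smul hMsymm, Mnorm2_smul]
    have hqine : q i ≠ 0 := (hq i).ne'
    field_simp
    ring
  have hI : ∑ i, Minn M (Z k - Zstar) (blockRestrict b i S) = P := by
    rw [hPdef, ← Minn_sum_right, hSsum]
  have hLHS : ∑ i, q i * (Mnorm2 M (Znext i - Zstar) + c * newsum
        + c * (τ : ℝ) * Mnorm2 M (Z k - Znext i))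
      = Mnorm2 M (Z k - Zstar) + c * newsum - (2 * η / n) * P
        + ((1 + c * (τ : ℝ)) * (η ^ 2 / (n : ℝ) ^ 2)) * A := by
    rw [Finset.sum_congr rfl (fun i _ => key_i i)]
    rw [Finset.sum_add_distrib, Finset.sum_sub_distrib, Finset.sum_add_distrib,
      ← Finset.sum_mul, ← Finset.mul_sum, ← Finset.mul_sum, ← Finset.mul_sum,
      hqsum, hI, ← hAdef]
    ring
  -- norm of Zbar - Z k
  have hZbarnorm : Mnorm2 M (Zbar - Z k) = η ^ 2 * s := by
    have h : Zbar - Z k = (-η) • S := by rw [hZbar, neg_smul]; abel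
    rw [h, Mnorm2_smul, ← hsdef]; ring
  have hX : (1 / (n : ℝ)) *
        (1 / η - 2 * (τ : ℝ) * Real.sqrt κ / ((n : ℝ) * Real.sqrt qmin)
          - κ / ((n : ℝ) * qmin)) * Mnorm2 M (Zbar - Z k)
      = (η / n) * s - (η ^ 2 * γ / (n : ℝ) ^ 2) * (2 * (τ : ℝ)) * s
        - (η ^ 2 / (n : ℝ) ^ 2) * (κ / qmin * s) := by
    rw [hZbarnorm, hsqrtgamma]
    have hne : Real.sqrt qmin ≠ 0 := ne_of_gt (Real.sqrt_pos.2 hqmin_pos)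
    field_simp
  rw [hΦ, hLHS, hX, hshift]
  linarith [hkey1, hkey2]
end
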